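/- arXiv:1505.03314 — 8 statements merged into one kernel-verified Lean document; each statement's English description precedes it below -/
import Mathlib

section
/- The Ahmed integral evaluates as ∫₀¹ arctan(√(2 + x²)) / ((1 + x²)·√(2 + x²)) dx = 5π²/96. -/
open Real MeasureTheory intervalIntegral

lemma b_int (b : ℝ) (hb : 0 < b) :
    ∫ z in (0:ℝ)..1, 1/(b^2+z^2) = arctan b⁻¹ / b := by
  have hderiv : ∀ z ∈ Set.uIcc (0:ℝ) 1,
      HasDerivAt (fun z => b⁻¹ * arctan (z/b)) (1/(b^2+z^2)) z := by
    intro z _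
    have h1 : HasDerivAt (fun z : ℝ => z / b) (1/b) z := by
      simpa using (hasDerivAt_id z).div_const b
    have h2 := (Real.hasDerivAt_arctan (z/b)).comp z h1
    have h3 := h2.const_mul b⁻¹
    refine h3.congr_deriv (Eq.symm ?_)
    have hb2 : b^2 + z^2 ≠ 0 := by positivity
    field_simp
  have hint : IntervalIntegrable (fun z => 1/(b^2+z^2)) volume 0 1 := by
    apply Continuous.intervalIntegrable
    exact continuous_const.div (by continuity) (fun z => by positivity)
  rw [integral_eq_sub_of_hasDerivAt hderiv hint]
  simp [one_div]
  ring

lemma g_inner (t : ℝ) :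
    ∫ u in (0:ℝ)..1, 1/((1+t^2)*(2+t^2+u^2))
      = arctan (Real.sqrt (2+t^2))⁻¹ / ((1+t^2) * Real.sqrt (2+t^2)) := by
  set b := Real.sqrt (2+t^2) with hbdef
  have hb : 0 < b := Real.sqrt_pos.mpr (by positivity)
  have hb2 : b^2 = 2 + t^2 := Real.sq_sqrt (by positivity)
  have h1t : (0:ℝ) < 1 + t^2 := by positivity
  have : ∀ u : ℝ, 1/((1+t^2)*(2+t^2+u^2)) = (1+t^2)⁻¹ * (1/(b^2+u^2)) := by
    intro u
    rw [hb2]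
    field_simp
  simp_rw [this]
  rw [intervalIntegral.integral_const_mul, b_int b hb]
  field_simp


lemma sqrt_cont : Continuous (fun x : ℝ => Real.sqrt (2+x^2)) :=
  Real.continuous_sqrt.comp (by continuity)

lemma denom_ne (x : ℝ) : (1+x^2) * Real.sqrt (2+x^2) ≠ 0 := by
  have : 0 < Real.sqrt (2+x^2) := Real.sqrt_pos.mpr (by positivity)
  positivity

lemma f_cont : Continuous (fun x : ℝ =>
    arctan (Real.sqrt (2+x^2))⁻¹ / ((1+x^2) * Real.sqrt (2+x^2))) := by
  apply Continuous.div
  · exact Real.continuous_arctan.comp (Continuous.inv₀ sqrt_cont (fun x => by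
      have : 0 < Real.sqrt (2+x^2) := Real.sqrt_pos.mpr (by positivity)
      positivity))
  · exact Continuous.mul (by continuity) sqrt_cont
  · exact denom_ne

lemma w_cont : Continuous (fun x : ℝ => 1 / ((1+x^2) * Real.sqrt (2+x^2))) :=
  continuous_const.div (Continuous.mul (by continuity) sqrt_cont) denom_ne

lemma pi_six : ∫ x in (0:ℝ)..1, 1 / ((1+x^2) * Real.sqrt (2+x^2)) = π/6 := by
  have hderiv : ∀ x ∈ Set.uIcc (0:ℝ) 1,
      HasDerivAt (fun x => arctan (x / Real.sqrt (2+x^2)))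
        (1 / ((1+x^2) * Real.sqrt (2+x^2))) x := by
    intro x _
    have h2 : (0:ℝ) < 2 + x^2 := by positivity
    have hb : 0 < Real.sqrt (2+x^2) := Real.sqrt_pos.mpr h2
    have hb2 : Real.sqrt (2+x^2) ^ 2 = 2 + x^2 := Real.sq_sqrt h2.le
    have hs : HasDerivAt (fun x : ℝ => Real.sqrt (2+x^2))
        (x / Real.sqrt (2+x^2)) x := by
      have h0 : HasDerivAt (fun x : ℝ => 2+x^2) (2*x) x := by
        simpa using ((hasDerivAt_pow 2 x).const_add 2)
      have := (Real.hasDerivAt_sqrt (ne_of_gt h2)).comp x h0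
      refine this.congr_deriv (Eq.symm ?_)
      field_simp
    have hq : HasDerivAt (fun x : ℝ => x / Real.sqrt (2+x^2))
        (2 / ((2+x^2) * Real.sqrt (2+x^2))) x := by
      have := (hasDerivAt_id x).div hs (ne_of_gt hb)
      refine this.congr_deriv (Eq.symm ?_)
      rw [div_eq_div_iff (by positivity) (by positivity)]
      have e : Real.sqrt (2+x^2) * Real.sqrt (2+x^2) = 2 + x^2 := by
        rw [← sq]; exact hb2
      field_simp
      rw [id_eq, hb2]
      ring
    have := (Real.hasDerivAt_arctan (x / Real.sqrt (2+x^2))).comp x hq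
    refine this.congr_deriv (Eq.symm ?_)
    have e : Real.sqrt (2+x^2) * Real.sqrt (2+x^2) = 2 + x^2 := by
      rw [← sq]; exact hb2
    rw [div_pow, hb2]
    rw [eq_comm, div_mul_eq_mul_div, div_eq_div_iff (by positivity)]
    · field_simp
      nlinarith [e]
    · have : (0:ℝ) < 1 + x^2/(2+x^2) := by positivity
      positivity
  rw [integral_eq_sub_of_hasDerivAt hderiv (w_cont.intervalIntegrable 0 1)]
  have h1 : arctan ((Real.sqrt 3)⁻¹) = π/6 := by
    rw [show ((Real.sqrt 3)⁻¹ : ℝ) = Real.tan (π/6) by rw [Real.tan_pi_div_six, one_div]]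
    exact Real.arctan_tan (by linarith [pi_pos]) (by linarith [pi_pos])
  norm_num [h1]


lemma swap_lemma (F : ℝ → ℝ → ℝ) (hF : Continuous (Function.uncurry F)) :
    ∫ x in (0:ℝ)..1, ∫ z in (0:ℝ)..1, F x z
      = ∫ z in (0:ℝ)..1, ∫ x in (0:ℝ)..1, F x z := by
  simp only [intervalIntegral.integral_of_le (zero_le_one : (0:ℝ) ≤ 1)]
  apply MeasureTheory.integral_integral_swap
  rw [Measure.prod_restrict, ← Measure.volume_eq_prod]
  apply MeasureTheory.IntegrableOn.mono_set
    (t := Set.Icc (0:ℝ) 1 ×ˢ Set.Icc (0:ℝ) 1)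
  · exact hF.continuousOn.integrableOn_compact
      ((isCompact_Icc).prod (isCompact_Icc))
  · exact Set.prod_mono Set.Ioc_subset_Icc_self Set.Ioc_subset_Icc_self










lemma K_val :
    ∫ x in (0:ℝ)..1,
      arctan (Real.sqrt (2+x^2))⁻¹ / ((1+x^2) * Real.sqrt (2+x^2)) = π^2/32 := by
  set f : ℝ → ℝ := fun x =>
    arctan (Real.sqrt (2+x^2))⁻¹ / ((1+x^2) * Real.sqrt (2+x^2)) with hf
  set K := ∫ x in (0:ℝ)..1, f x with hK
  set G : ℝ → ℝ → ℝ := fun x z => 1/((1+z^2)*(2+x^2+z^2)) with hG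
  have hGcont : Continuous (Function.uncurry G) := by
    apply continuous_const.div
    · continuity
    · rintro ⟨x, z⟩
      have : (0:ℝ) < (1+z^2)*(2+x^2+z^2) := by positivity
      exact ne_of_gt this
  have hGx_cont : ∀ x : ℝ, Continuous (fun z => G x z) := by
    intro x
    exact hGcont.comp (Continuous.prodMk_right x)
  have hS_cont : ∀ x : ℝ, Continuous (fun z : ℝ => 1/((1+x^2)*(1+z^2))) := by
    intro x
    apply continuous_const.div
    · continuity
    · intro z; positivity
  -- Step 1: inner integral of G x z over z
  have step1 : ∀ x : ℝ, ∫ z in (0:ℝ)..1, G x z = π/4 * (1+x^2)⁻¹ - f x := by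
    intro x
    have hpt : ∀ z : ℝ, G x z
        = 1/((1+x^2)*(1+z^2)) - 1/((1+x^2)*(2+x^2+z^2)) := by
      intro z
      have h1 : (0:ℝ) < 1+x^2 := by positivity
      have h2 : (0:ℝ) < 1+z^2 := by positivity
      have h3 : (0:ℝ) < 2+x^2+z^2 := by positivity
      simp only [hG]
      field_simp [hG]
      ring
    simp_rw [hpt]
    rw [intervalIntegral.integral_sub
        ((hS_cont x).intervalIntegrable 0 1)
        (by
          apply Continuous.intervalIntegrable
          apply continuous_const.div
          · continuity
          · intro z; positivity)]
    rw [g_inner x]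
    have : ∀ z : ℝ, 1/((1+x^2)*(1+z^2)) = (1+x^2)⁻¹ * (1/(1+z^2)) := by
      intro z; field_simp
    simp_rw [this]
    rw [intervalIntegral.integral_const_mul, integral_one_div_one_add_sq]
    simp [Real.arctan_one]
    ring
  -- Step 2: Fubini
  have step2 : ∫ x in (0:ℝ)..1, ∫ z in (0:ℝ)..1, G x z = K := by
    rw [swap_lemma G hGcont]
    have : ∀ z : ℝ, (∫ x in (0:ℝ)..1, G x z) = f z := by
      intro z
      have : ∀ x : ℝ, G x z = 1/((1+z^2)*(2+z^2+x^2)) := by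
        intro x; simp only [hG]; ring_nf
      simp_rw [this]
      exact g_inner z
    simp_rw [this]
    exact hK.symm
  -- Step 3: combine
  have step3 : ∫ x in (0:ℝ)..1, ∫ z in (0:ℝ)..1, G x z = π^2/16 - K := by
    simp_rw [step1]
    rw [intervalIntegral.integral_sub
        (by
          apply Continuous.intervalIntegrable
          apply continuous_const.mul
          apply Continuous.inv₀ (by continuity) (fun x => by positivity))
        (f_cont.intervalIntegrable 0 1)]
    rw [intervalIntegral.integral_const_mul]
    have : ∀ x : ℝ, ((1:ℝ)+x^2)⁻¹ = 1/(1+x^2) := fun x => (one_div _).symm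
    simp_rw [this]
    rw [integral_one_div_one_add_sq]
    simp [Real.arctan_one]
    ring
  have h := step3
  rw [step2] at h
  linarith


theorem ahmed_integral :
    ∫ x in (0:ℝ)..1,
      Real.arctan (Real.sqrt (2 + x ^ 2)) / ((1 + x ^ 2) * Real.sqrt (2 + x ^ 2))
      = 5 * Real.pi ^ 2 / 96 := by
  have hpt : ∀ x : ℝ, arctan (Real.sqrt (2+x^2)) / ((1+x^2) * Real.sqrt (2+x^2))
      = π/2 * (1/((1+x^2) * Real.sqrt (2+x^2)))
        - arctan (Real.sqrt (2+x^2))⁻¹ / ((1+x^2) * Real.sqrt (2+x^2)) := by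
    intro x
    have hb : 0 < Real.sqrt (2+x^2) := Real.sqrt_pos.mpr (by positivity)
    rw [Real.arctan_inv_of_pos hb]
    ring
  simp_rw [hpt]
  rw [intervalIntegral.integral_sub
      ((w_cont.intervalIntegrable 0 1).const_mul (π/2))
      (f_cont.intervalIntegrable 0 1)]
  rw [intervalIntegral.integral_const_mul, pi_six, K_val]
  ring
end

section
/- Formula (F1): Let α > 0 and let f : ℝ² → ℝ be continuous on a set containing [0,α] × [0,α]. Then ∫₀^α ∫₀^α f(x,y) dx dy = ∫₀¹ (∫₀^α β·(f(β, β·x) + f(β·x, β)) dβ) dx. -/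
open Real Set MeasureTheory

theorem formula_F1 (α : ℝ) (hα : 0 < α) (f : ℝ → ℝ → ℝ)
    (hf : ContinuousOn (fun p : ℝ × ℝ => f p.1 p.2) (Set.Icc 0 α ×ˢ Set.Icc 0 α)) :
    ∫ y in (0:ℝ)..α, ∫ x in (0:ℝ)..α, f x y
      = ∫ x in (0:ℝ)..1, ∫ β in (0:ℝ)..α, β * (f β (β * x) + f (β * x) β) := by
  set μ : Measure ℝ := volume.restrict (Set.Ioc 0 α) with hμ
  set S : Set ℝ := Set.Ioc (0:ℝ) α with hS
  -- integrability of f on the square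
  have hsq : IntegrableOn (fun p : ℝ × ℝ => f p.1 p.2) (S ×ˢ S) volume := by
    exact (hf.integrableOn_compact (isCompact_Icc.prod isCompact_Icc)).mono_set
      (Set.prod_mono Set.Ioc_subset_Icc_self Set.Ioc_subset_Icc_self)
  have hprod : Integrable (fun p : ℝ × ℝ => f p.1 p.2) (μ.prod μ) := by
    rw [hμ, Measure.prod_restrict, ← Measure.volume_eq_prod]
    exact hsq
  -- the indicator functions of the two triangles
  set g : ℝ → ℝ → ℝ := fun x y => if y ≤ x then f x y else 0 with hg
  set g' : ℝ → ℝ → ℝ := fun x y => if y ≤ x then 0 else f x y with hg'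
  have hmeasset : MeasurableSet {p : ℝ × ℝ | p.2 ≤ p.1} :=
    (isClosed_le continuous_snd continuous_fst).measurableSet
  have hgu : Function.uncurry g = Set.indicator {p : ℝ × ℝ | p.2 ≤ p.1} (fun p => f p.1 p.2) := by
    ext p; simp [Function.uncurry, hg, Set.indicator_apply, Set.mem_setOf_eq]
  have hg'u : Function.uncurry g' =
      Set.indicator {p : ℝ × ℝ | p.2 ≤ p.1}ᶜ (fun p => f p.1 p.2) := by
    ext p
    by_cases h : p.2 ≤ p.1 <;> simp [Function.uncurry, hg', Set.indicator_apply, h]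
  have hg_prod : Integrable (Function.uncurry g) (μ.prod μ) := by
    rw [hgu]; exact hprod.indicator hmeasset
  have hg'_prod : Integrable (Function.uncurry g') (μ.prod μ) := by
    rw [hg'u]; exact hprod.indicator hmeasset.compl
  -- integrability of partial integrals
  have hA : Integrable (fun x => ∫ y, g x y ∂μ) μ := hg_prod.integral_prod_left
  have hB : Integrable (fun y => ∫ x, g x y ∂μ) μ := hg_prod.swap.integral_prod_left
  have hB' : Integrable (fun y => ∫ x, g' x y ∂μ) μ := hg'_prod.swap.integral_prod_left
  -- pointwise identities on S
  have E1' : ∀ y ∈ S, ∫ x, g' x y ∂μ = ∫ x in Set.Ioc 0 y, f x y := by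
    intro y hy
    have h1 : (fun x => g' x y) = Set.indicator (Set.Iio y) (fun x => f x y) := by
      funext x
      by_cases h : y ≤ x
      · simp [hg', Set.indicator_apply, h, not_lt.mpr h]
      · simp [hg', Set.indicator_apply, h, not_le.mp h]
    rw [h1, hμ, integral_indicator measurableSet_Iio,
      Measure.restrict_restrict measurableSet_Iio]
    have h2 : Set.Iio y ∩ Set.Ioc 0 α = Set.Ioo 0 y := by
      ext x
      simp only [Set.mem_inter_iff, Set.mem_Iio, Set.mem_Ioc, Set.mem_Ioo]
      constructor
      · rintro ⟨h1, h2, h3⟩; exact ⟨h2, h1⟩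
      · rintro ⟨h1, h2⟩; exact ⟨h2, h1, le_trans h2.le hy.2⟩
    rw [h2, ← integral_Ioc_eq_integral_Ioo]
  have E2 : ∀ x ∈ S, ∫ y, g x y ∂μ = ∫ y in Set.Ioc 0 x, f x y := by
    intro x hx
    have h1 : (fun y => g x y) = Set.indicator (Set.Iic x) (fun y => f x y) := by
      funext y; simp [hg, Set.indicator_apply]
    rw [h1, hμ, integral_indicator measurableSet_Iic,
      Measure.restrict_restrict measurableSet_Iic]
    have h2 : Set.Iic x ∩ Set.Ioc 0 α = Set.Ioc 0 x := by
      ext y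
      simp only [Set.mem_inter_iff, Set.mem_Iic, Set.mem_Ioc]
      constructor
      · rintro ⟨h1, h2, h3⟩; exact ⟨h2, h1⟩
      · rintro ⟨h1, h2⟩; exact ⟨h2, h1, le_trans h2 hx.2⟩
    rw [h2]
  -- Fubini swap for g
  have hswap : ∫ y, ∫ x, g x y ∂μ ∂μ = ∫ x, ∫ y, g x y ∂μ ∂μ := by
    have := MeasureTheory.integral_integral_swap (μ := μ) (ν := μ)
      (f := fun y x => g x y) hg_prod.swap
    exact this
  -- LHS computation
  have hLHS : (∫ y in (0:ℝ)..α, ∫ x in (0:ℝ)..α, f x y)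
      = (∫ x, ∫ y, g x y ∂μ ∂μ) + ∫ y, ∫ x, g' x y ∂μ ∂μ := by
    rw [intervalIntegral.integral_of_le hα.le]
    simp only [intervalIntegral.integral_of_le hα.le]
    have step : ∫ y, (∫ x, f x y ∂μ) ∂μ
        = ∫ y, ((∫ x, g x y ∂μ) + ∫ x, g' x y ∂μ) ∂μ := by
      refine integral_congr_ae ?_
      filter_upwards [hprod.swap.prod_right_ae] with y hy
      have hgint : Integrable (fun x => g x y) μ := by
        have h1 : (fun x => g x y) = Set.indicator (Set.Ici y) (fun x => f x y) := by
          funext x; simp [hg, Set.indicator_apply]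
        rw [h1]; exact hy.indicator measurableSet_Ici
      have hg'int : Integrable (fun x => g' x y) μ := by
        have h1 : (fun x => g' x y) = (fun x => f x y) - (fun x => g x y) := by
          funext x; by_cases h : y ≤ x <;> simp [hg, hg', h]
        rw [h1]; exact hy.sub hgint
      rw [← integral_add hgint hg'int]
      congr 1; funext x
      by_cases h : y ≤ x <;> simp [hg, hg', h]
    rw [step, integral_add hB hB', hswap]
  -- RHS computation
  set F : ℝ → ℝ → ℝ := fun x β => β * (f β (β * x) + f (β * x) β) with hF
  have hFc : ContinuousOn (Function.uncurry F) (Set.Icc 0 1 ×ˢ Set.Icc 0 α) := by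
    have hmap : Set.MapsTo (fun p : ℝ × ℝ => ((p.2, p.2 * p.1) : ℝ × ℝ))
        (Set.Icc 0 1 ×ˢ Set.Icc 0 α) (Set.Icc 0 α ×ˢ Set.Icc 0 α) := by
      rintro ⟨x, β⟩ ⟨⟨hx0, hx1⟩, ⟨hβ0, hβα⟩⟩
      exact ⟨⟨hβ0, hβα⟩, ⟨mul_nonneg hβ0 hx0,
        le_trans (mul_le_of_le_one_right hβ0 hx1) hβα⟩⟩
    have hmap' : Set.MapsTo (fun p : ℝ × ℝ => ((p.2 * p.1, p.2) : ℝ × ℝ))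
        (Set.Icc 0 1 ×ˢ Set.Icc 0 α) (Set.Icc 0 α ×ˢ Set.Icc 0 α) := by
      rintro ⟨x, β⟩ ⟨⟨hx0, hx1⟩, ⟨hβ0, hβα⟩⟩
      exact ⟨⟨mul_nonneg hβ0 hx0,
        le_trans (mul_le_of_le_one_right hβ0 hx1) hβα⟩, ⟨hβ0, hβα⟩⟩
    have c1 : ContinuousOn (fun p : ℝ × ℝ => f p.2 (p.2 * p.1))
        (Set.Icc 0 1 ×ˢ Set.Icc 0 α) :=
      hf.comp (continuous_snd.prodMk (continuous_snd.mul continuous_fst)).continuousOn hmap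
    have c2 : ContinuousOn (fun p : ℝ × ℝ => f (p.2 * p.1) p.2)
        (Set.Icc 0 1 ×ˢ Set.Icc 0 α) :=
      hf.comp ((continuous_snd.mul continuous_fst).prodMk continuous_snd).continuousOn hmap'
    exact (continuous_snd.continuousOn).mul (c1.add c2)
  have hF_prod : Integrable (Function.uncurry F)
      ((volume.restrict (Set.Ioc (0:ℝ) 1)).prod μ) := by
    rw [hμ, Measure.prod_restrict, ← Measure.volume_eq_prod]
    exact (hFc.integrableOn_compact (isCompact_Icc.prod isCompact_Icc)).mono_set
      (Set.prod_mono Set.Ioc_subset_Icc_self Set.Ioc_subset_Icc_self)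
  have hRHS : (∫ x in (0:ℝ)..1, ∫ β in (0:ℝ)..α, F x β)
      = ∫ β, (∫ u in Set.Ioc 0 β, f β u) + (∫ u in Set.Ioc 0 β, f u β) ∂μ := by
    rw [intervalIntegral.integral_of_le zero_le_one]
    simp only [intervalIntegral.integral_of_le hα.le, ← hμ]
    rw [MeasureTheory.integral_integral_swap hF_prod]
    refine integral_congr_ae ?_
    rw [hμ]
    filter_upwards [ae_restrict_mem measurableSet_Ioc] with β hβ
    have hβ0 : (0:ℝ) < β := hβ.1
    have hcont1 : ContinuousOn (fun u => f β u) (Set.Icc 0 β) := by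
      refine hf.comp (Continuous.continuousOn (continuous_const.prodMk continuous_id)) ?_
      intro u hu
      exact ⟨⟨hβ0.le, hβ.2⟩, ⟨hu.1, le_trans hu.2 hβ.2⟩⟩
    have hcont2 : ContinuousOn (fun u => f u β) (Set.Icc 0 β) := by
      refine hf.comp (Continuous.continuousOn (continuous_id.prodMk continuous_const)) ?_
      intro u hu
      exact ⟨⟨hu.1, le_trans hu.2 hβ.2⟩, ⟨hβ0.le, hβ.2⟩⟩
    have hi1 : IntervalIntegrable (fun u => f β u) volume 0 β :=
      (hcont1.mono (by rw [Set.uIcc_of_le hβ0.le])).intervalIntegrable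
    have hi2 : IntervalIntegrable (fun u => f u β) volume 0 β :=
      (hcont2.mono (by rw [Set.uIcc_of_le hβ0.le])).intervalIntegrable
    have key : ∫ x in Set.Ioc (0:ℝ) 1, F x β
        = ∫ u in (0:ℝ)..β, (f β u + f u β) := by
      rw [← intervalIntegral.integral_of_le zero_le_one]
      have : ∀ x, F x β = β * ((fun u => f β u + f u β) (β * x)) := fun x => rfl
      simp only [this]
      have hsub := intervalIntegral.integral_comp_mul_left (a := 0) (b := 1)
        (fun u => f β u + f u β) hβ0.ne'
      rw [intervalIntegral.integral_const_mul, hsub]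
      simp only [mul_zero, mul_one, smul_eq_mul]
      rw [← mul_assoc, mul_inv_cancel₀ hβ0.ne', one_mul]
    rw [key, intervalIntegral.integral_add hi1 hi2,
      intervalIntegral.integral_of_le hβ0.le, intervalIntegral.integral_of_le hβ0.le]
  -- combine
  rw [hLHS, hRHS]
  have split : ∫ β, (∫ u in Set.Ioc 0 β, f β u) + (∫ u in Set.Ioc 0 β, f u β) ∂μ
      = (∫ β, (∫ u in Set.Ioc 0 β, f β u) ∂μ) + ∫ β, (∫ u in Set.Ioc 0 β, f u β) ∂μ := by
    refine integral_add ?_ ?_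
    · refine hA.congr ?_
      rw [hμ]
      filter_upwards [ae_restrict_mem measurableSet_Ioc] with x hx
      exact E2 x hx
    · refine hB'.congr ?_
      rw [hμ]
      filter_upwards [ae_restrict_mem measurableSet_Ioc] with y hy
      exact E1' y hy
  rw [split]
  congr 1
  · refine integral_congr_ae ?_
    rw [hμ]
    filter_upwards [ae_restrict_mem measurableSet_Ioc] with x hx
    exact E2 x hx
  · refine integral_congr_ae ?_
    rw [hμ]
    filter_upwards [ae_restrict_mem measurableSet_Ioc] with y hy
    exact E1' y hy
end

section
/- Formula (F2) for n = 3: Let α > 0 and let f : ℝ³ → ℝ be continuous on a set containing [0,α]³. Then ∫₀^α ∫₀^α ∫₀^α f(x₁,x₂,x₃) dx₁ dx₂ dx₃ = ∫₀¹ ∫₀¹ (∫₀^α β² · ( f(β, β·x₂, β·x₃) + f(β·x₁, β, β·x₃) + f(β·x₁, β·x₂, β) ) dβ) dx₁ dx₂ (where in each summand Φ_p the p-th argument equals β and the remaining arguments are β times the corresponding xᵢ). -/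
open Real Set MeasureTheory

section Helpers

private lemma myIntegrableOn {F : ℝ → ℝ → ℝ} (hF : Continuous fun p : ℝ × ℝ => F p.1 p.2)
    (a b c d : ℝ) :
    Integrable (fun p : ℝ × ℝ => F p.1 p.2)
      ((volume.restrict (Ioc a b)).prod (volume.restrict (Ioc c d))) := by
  rw [Measure.prod_restrict]
  have h1 : IntegrableOn (fun p : ℝ × ℝ => F p.1 p.2) (Icc a b ×ˢ Icc c d) volume :=
    (hF.continuousOn).integrableOn_compact (isCompact_Icc.prod isCompact_Icc)
  exact h1.mono_set (Set.prod_mono Ioc_subset_Icc_self Ioc_subset_Icc_self)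

private lemma swapRect {F : ℝ → ℝ → ℝ} (hF : Continuous fun p : ℝ × ℝ => F p.1 p.2)
    {a b c d : ℝ} (hab : a ≤ b) (hcd : c ≤ d) :
    ∫ x in a..b, ∫ y in c..d, F x y = ∫ y in c..d, ∫ x in a..b, F x y := by
  rw [intervalIntegral.integral_of_le hab, intervalIntegral.integral_of_le hcd]
  simp_rw [intervalIntegral.integral_of_le hab, intervalIntegral.integral_of_le hcd]
  exact MeasureTheory.integral_integral_swap (myIntegrableOn hF a b c d)

private lemma swapTriangle {F : ℝ → ℝ → ℝ} (hF : Continuous fun p : ℝ × ℝ => F p.1 p.2)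
    {c : ℝ} (hc : 0 ≤ c) :
    ∫ x in (0:ℝ)..c, ∫ y in x..c, F x y = ∫ y in (0:ℝ)..c, ∫ x in (0:ℝ)..y, F x y := by
  set μ := volume.restrict (Ioc (0:ℝ) c) with hμ
  set W : ℝ × ℝ → ℝ := fun p => ({q : ℝ × ℝ | q.1 < q.2}).indicator (fun q => F q.1 q.2) p with hW
  have hWint : Integrable W (μ.prod μ) := by
    apply Integrable.indicator (myIntegrableOn hF 0 c 0 c)
    exact measurableSet_lt measurable_fst measurable_snd
  have hL : ∀ x ∈ Ioc (0:ℝ) c, (∫ y in x..c, F x y) = ∫ y, W (x, y) ∂μ := by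
    intro x hx
    have h : (fun y => W (x, y)) = (Ioi x).indicator (fun y => F x y) := by
      funext y
      simp [hW, Set.indicator_apply, Set.mem_Ioi]
    rw [h, hμ, setIntegral_indicator measurableSet_Ioi]
    have h2 : Ioc (0:ℝ) c ∩ Ioi x = Ioc x c := by
      ext y; simp only [mem_inter_iff, mem_Ioc, mem_Ioi]
      constructor
      · rintro ⟨⟨_, h2⟩, h3⟩; exact ⟨h3, h2⟩
      · rintro ⟨h1, h2⟩; exact ⟨⟨lt_trans hx.1 h1, h2⟩, h1⟩
    rw [h2, intervalIntegral.integral_of_le hx.2]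
  have hR : ∀ y ∈ Ioc (0:ℝ) c, (∫ x in (0:ℝ)..y, F x y) = ∫ x, W (x, y) ∂μ := by
    intro y hy
    have h : (fun x => W (x, y)) = (Iio y).indicator (fun x => F x y) := by
      funext x
      simp [hW, Set.indicator_apply, Set.mem_Iio]
    rw [h, hμ, setIntegral_indicator measurableSet_Iio]
    have h2 : Ioc (0:ℝ) c ∩ Iio y = Ioo 0 y := by
      ext x; simp only [mem_inter_iff, mem_Ioc, mem_Ioo, mem_Iio]
      constructor
      · rintro ⟨⟨h1, _⟩, h3⟩; exact ⟨h1, h3⟩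
      · rintro ⟨h1, h2⟩; exact ⟨⟨h1, le_trans h2.le hy.2⟩, h2⟩
    rw [h2, intervalIntegral.integral_of_le hy.1.le, integral_Ioc_eq_integral_Ioo]
  calc ∫ x in (0:ℝ)..c, ∫ y in x..c, F x y
      = ∫ x, ∫ y, W (x, y) ∂μ ∂μ := by
        rw [intervalIntegral.integral_of_le hc]
        exact setIntegral_congr_fun measurableSet_Ioc (fun x hx => hL x hx)
    _ = ∫ y, ∫ x, W (x, y) ∂μ ∂μ := MeasureTheory.integral_integral_swap hWint
    _ = ∫ y in (0:ℝ)..c, ∫ x in (0:ℝ)..y, F x y := by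
        rw [intervalIntegral.integral_of_le hc]
        exact setIntegral_congr_fun measurableSet_Ioc (fun y hy => (hR y hy).symm)

private lemma sqDecomp {F : ℝ → ℝ → ℝ} (hF : Continuous fun p : ℝ × ℝ => F p.1 p.2)
    {c : ℝ} (hc : 0 ≤ c) :
    ∫ u in (0:ℝ)..c, ∫ v in (0:ℝ)..c, F u v
      = ∫ b in (0:ℝ)..c, ((∫ v in (0:ℝ)..b, F b v) + (∫ u in (0:ℝ)..b, F u b)) := by
  have hcont : ∀ x : ℝ, Continuous (F x) := fun x => hF.comp (continuous_const.prodMk continuous_id)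
  have h1 : Continuous fun u : ℝ => ∫ v in (0:ℝ)..u, F u v := by
    apply intervalIntegral.continuous_parametric_intervalIntegral_of_continuous (f := F) hF
      continuous_id
  have h2 : Continuous fun u : ℝ => ∫ v in u..c, F u v := by
    have hs : Continuous fun u : ℝ => ∫ v in (0:ℝ)..c, F u v :=
      intervalIntegral.continuous_parametric_intervalIntegral_of_continuous' hF 0 c
    have h : (fun u : ℝ => ∫ v in u..c, F u v)
        = fun u => (∫ v in (0:ℝ)..c, F u v) - ∫ v in (0:ℝ)..u, F u v := by
      funext u
      rw [eq_sub_iff_add_eq, add_comm]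
      exact intervalIntegral.integral_add_adjacent_intervals
        ((hcont u).intervalIntegrable _ _) ((hcont u).intervalIntegrable _ _)
    rw [h]; exact hs.sub h1
  calc ∫ u in (0:ℝ)..c, ∫ v in (0:ℝ)..c, F u v
      = ∫ u in (0:ℝ)..c, ((∫ v in (0:ℝ)..u, F u v) + ∫ v in u..c, F u v) := by
        apply intervalIntegral.integral_congr
        intro u _
        exact (intervalIntegral.integral_add_adjacent_intervals
          ((hcont u).intervalIntegrable _ _) ((hcont u).intervalIntegrable _ _)).symm
    _ = (∫ u in (0:ℝ)..c, ∫ v in (0:ℝ)..u, F u v) + ∫ u in (0:ℝ)..c, ∫ v in u..c, F u v :=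
        intervalIntegral.integral_add (h1.intervalIntegrable _ _) (h2.intervalIntegrable _ _)
    _ = (∫ u in (0:ℝ)..c, ∫ v in (0:ℝ)..u, F u v)
          + ∫ v in (0:ℝ)..c, ∫ u in (0:ℝ)..v, F u v := by rw [swapTriangle hF hc]
    _ = ∫ b in (0:ℝ)..c, ((∫ v in (0:ℝ)..b, F b v) + (∫ u in (0:ℝ)..b, F u b)) := by
        rw [← intervalIntegral.integral_add]
        · exact h1.intervalIntegrable _ _
        · have h : Continuous fun v : ℝ => ∫ u in (0:ℝ)..v, F u v :=
            intervalIntegral.continuous_parametric_intervalIntegral_of_continuous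
              (f := fun v u => F u v) (hF.comp (continuous_snd.prodMk continuous_fst))
              continuous_id
          exact h.intervalIntegrable _ _

private lemma scaleInt (k : ℝ → ℝ) (β : ℝ) :
    β * ∫ x in (0:ℝ)..1, k (β * x) = ∫ u in (0:ℝ)..β, k u := by
  have h := intervalIntegral.smul_integral_comp_mul_left (f := k) (a := (0:ℝ)) (b := 1) β
  simpa [smul_eq_mul] using h

private lemma swapScale {k : ℝ → ℝ → ℝ} (hk : Continuous fun p : ℝ × ℝ => k p.1 p.2)
    {α : ℝ} (hα : 0 ≤ α) :
    (∫ x in (0:ℝ)..1, ∫ β in (0:ℝ)..α, β * k β (β * x))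
      = ∫ β in (0:ℝ)..α, ∫ u in (0:ℝ)..β, k β u := by
  refine .trans (swapRect (F := fun x β => β * k β (β * x)) (by fun_prop) zero_le_one hα) ?_
  apply intervalIntegral.integral_congr
  intro β _
  show (∫ x in (0:ℝ)..1, β * k β (β * x)) = ∫ u in (0:ℝ)..β, k β u
  rw [intervalIntegral.integral_const_mul]
  exact scaleInt (k β) β

private lemma swapScale2 {k : ℝ → ℝ → ℝ} (hk : Continuous fun p : ℝ × ℝ => k p.1 p.2)
    {α : ℝ} (hα : 0 ≤ α) :
    (∫ x in (0:ℝ)..1, ∫ β in (0:ℝ)..α, β ^ 2 * k β (β * x))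
      = ∫ β in (0:ℝ)..α, β * ∫ u in (0:ℝ)..β, k β u := by
  refine .trans (swapRect (F := fun x β => β ^ 2 * k β (β * x)) (by fun_prop) zero_le_one hα) ?_
  apply intervalIntegral.integral_congr
  intro β _
  show (∫ x in (0:ℝ)..1, β ^ 2 * k β (β * x)) = β * ∫ u in (0:ℝ)..β, k β u
  rw [intervalIntegral.integral_const_mul, pow_two, mul_assoc, scaleInt (k β) β]

private lemma intAdd3 {u v w : ℝ → ℝ} {a b : ℝ} (hu : Continuous u) (hv : Continuous v)
    (hw : Continuous w) :
    ∫ x in a..b, (u x + v x + w x)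
      = (∫ x in a..b, u x) + (∫ x in a..b, v x) + (∫ x in a..b, w x) := by
  rw [intervalIntegral.integral_add (show IntervalIntegrable (fun x => u x + v x) volume a b from (hu.add hv).intervalIntegrable _ _)
      (hw.intervalIntegrable _ _),
    intervalIntegral.integral_add (hu.intervalIntegrable _ _) (hv.intervalIntegrable _ _)]

end Helpers

private lemma keyLemma (g : ℝ → ℝ → ℝ → ℝ)
    (hg : Continuous fun p : ℝ × ℝ × ℝ => g p.1 p.2.1 p.2.2) (α : ℝ) (hα : 0 < α) :
    ∫ x₃ in (0:ℝ)..α, ∫ x₂ in (0:ℝ)..α, ∫ x₁ in (0:ℝ)..α, g x₁ x₂ x₃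
      = ∫ x₁ in (0:ℝ)..1, ∫ x₂ in (0:ℝ)..1, ∫ x₃ in (0:ℝ)..1, ∫ β in (0:ℝ)..α,
          β ^ 2 * (g β (β * x₂) (β * x₃) + g (β * x₁) β (β * x₃)
            + g (β * x₁) (β * x₂) β) := by
  have hα' : (0:ℝ) ≤ α := hα.le
  -- the three "face" integrals
  set D₁ : ℝ → ℝ := fun c => ∫ w in (0:ℝ)..c, ∫ v in (0:ℝ)..c, g c v w with hD₁
  set D₂ : ℝ → ℝ := fun c => ∫ w in (0:ℝ)..c, ∫ u in (0:ℝ)..c, g u c w with hD₂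
  set D₃ : ℝ → ℝ := fun c => ∫ v in (0:ℝ)..c, ∫ u in (0:ℝ)..c, g u v c with hD₃
  have hD₁c : Continuous D₁ := by rw [hD₁]; fun_prop
  have hD₂c : Continuous D₂ := by rw [hD₂]; fun_prop
  have hD₃c : Continuous D₃ := by rw [hD₃]; fun_prop
  -- Left-hand side
  have hLHS : (∫ x₃ in (0:ℝ)..α, ∫ x₂ in (0:ℝ)..α, ∫ x₁ in (0:ℝ)..α, g x₁ x₂ x₃)
      = ∫ c in (0:ℝ)..α, (D₃ c + (D₂ c + D₁ c)) := by
    calc ∫ x₃ in (0:ℝ)..α, ∫ x₂ in (0:ℝ)..α, ∫ x₁ in (0:ℝ)..α, g x₁ x₂ x₃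
        = ∫ x₃ in (0:ℝ)..α, ∫ b in (0:ℝ)..α,
            ((∫ v in (0:ℝ)..b, g v b x₃) + (∫ u in (0:ℝ)..b, g b u x₃)) :=
          intervalIntegral.integral_congr fun x₃ _ =>
            sqDecomp (F := fun u v => g v u x₃) (by fun_prop) hα'
      _ = ∫ c in (0:ℝ)..α,
            ((∫ b in (0:ℝ)..c, ((∫ v in (0:ℝ)..b, g v b c) + (∫ u in (0:ℝ)..b, g b u c)))
              + (∫ x₃ in (0:ℝ)..c,
                  ((∫ v in (0:ℝ)..c, g v c x₃) + (∫ u in (0:ℝ)..c, g c u x₃)))) :=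
          sqDecomp (F := fun x₃ b =>
            (∫ v in (0:ℝ)..b, g v b x₃) + (∫ u in (0:ℝ)..b, g b u x₃)) (by fun_prop) hα'
      _ = ∫ c in (0:ℝ)..α, (D₃ c + (D₂ c + D₁ c)) := by
          apply intervalIntegral.integral_congr
          intro c hc
          rw [uIcc_of_le hα'] at hc
          show (∫ b in (0:ℝ)..c, ((∫ v in (0:ℝ)..b, g v b c) + (∫ u in (0:ℝ)..b, g b u c)))
              + (∫ x₃ in (0:ℝ)..c,
                  ((∫ v in (0:ℝ)..c, g v c x₃) + (∫ u in (0:ℝ)..c, g c u x₃)))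
            = D₃ c + (D₂ c + D₁ c)
          simp only [hD₁, hD₂, hD₃]
          congr 1
          · exact (sqDecomp (F := fun v u => g u v c) (by fun_prop) hc.1).symm
          · exact intervalIntegral.integral_add
              ((by fun_prop : Continuous fun x₃ : ℝ =>
                ∫ v in (0:ℝ)..c, g v c x₃).intervalIntegrable _ _)
              ((by fun_prop : Continuous fun x₃ : ℝ =>
                ∫ u in (0:ℝ)..c, g c u x₃).intervalIntegrable _ _)
  -- split the innermost integral of the right-hand side
  have hsplitβ : ∀ x₁ x₂ x₃ : ℝ,
      (∫ β in (0:ℝ)..α, β ^ 2 * (g β (β * x₂) (β * x₃) + g (β * x₁) β (β * x₃)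
        + g (β * x₁) (β * x₂) β))
      = (∫ β in (0:ℝ)..α, β ^ 2 * g β (β * x₂) (β * x₃))
        + (∫ β in (0:ℝ)..α, β ^ 2 * g (β * x₁) β (β * x₃))
        + (∫ β in (0:ℝ)..α, β ^ 2 * g (β * x₁) (β * x₂) β) := by
    intro x₁ x₂ x₃
    rw [← intAdd3 (by fun_prop) (by fun_prop) (by fun_prop)]
    exact intervalIntegral.integral_congr fun β _ => by ring
  have hsplit3 : ∀ x₁ x₂ : ℝ,
      (∫ x₃ in (0:ℝ)..1,
        ((∫ β in (0:ℝ)..α, β ^ 2 * g β (β * x₂) (β * x₃))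
          + (∫ β in (0:ℝ)..α, β ^ 2 * g (β * x₁) β (β * x₃))
          + (∫ β in (0:ℝ)..α, β ^ 2 * g (β * x₁) (β * x₂) β)))
      = (∫ x₃ in (0:ℝ)..1, ∫ β in (0:ℝ)..α, β ^ 2 * g β (β * x₂) (β * x₃))
        + (∫ x₃ in (0:ℝ)..1, ∫ β in (0:ℝ)..α, β ^ 2 * g (β * x₁) β (β * x₃))
        + (∫ β in (0:ℝ)..α, β ^ 2 * g (β * x₁) (β * x₂) β) := by
    intro x₁ x₂
    rw [intAdd3 (by fun_prop) (by fun_prop) (by fun_prop)]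
    simp
  have hsplit2 : ∀ x₁ : ℝ,
      (∫ x₂ in (0:ℝ)..1,
        ((∫ x₃ in (0:ℝ)..1, ∫ β in (0:ℝ)..α, β ^ 2 * g β (β * x₂) (β * x₃))
          + (∫ x₃ in (0:ℝ)..1, ∫ β in (0:ℝ)..α, β ^ 2 * g (β * x₁) β (β * x₃))
          + (∫ β in (0:ℝ)..α, β ^ 2 * g (β * x₁) (β * x₂) β)))
      = (∫ x₂ in (0:ℝ)..1, ∫ x₃ in (0:ℝ)..1, ∫ β in (0:ℝ)..α, β ^ 2 * g β (β * x₂) (β * x₃))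
        + (∫ x₃ in (0:ℝ)..1, ∫ β in (0:ℝ)..α, β ^ 2 * g (β * x₁) β (β * x₃))
        + (∫ x₂ in (0:ℝ)..1, ∫ β in (0:ℝ)..α, β ^ 2 * g (β * x₁) (β * x₂) β) := by
    intro x₁
    rw [intAdd3 (by fun_prop) (by fun_prop) (by fun_prop)]
    simp
  have hsplit1 :
      (∫ x₁ in (0:ℝ)..1,
        ((∫ x₂ in (0:ℝ)..1, ∫ x₃ in (0:ℝ)..1, ∫ β in (0:ℝ)..α, β ^ 2 * g β (β * x₂) (β * x₃))
          + (∫ x₃ in (0:ℝ)..1, ∫ β in (0:ℝ)..α, β ^ 2 * g (β * x₁) β (β * x₃))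
          + (∫ x₂ in (0:ℝ)..1, ∫ β in (0:ℝ)..α, β ^ 2 * g (β * x₁) (β * x₂) β)))
      = (∫ x₂ in (0:ℝ)..1, ∫ x₃ in (0:ℝ)..1, ∫ β in (0:ℝ)..α, β ^ 2 * g β (β * x₂) (β * x₃))
        + (∫ x₁ in (0:ℝ)..1, ∫ x₃ in (0:ℝ)..1, ∫ β in (0:ℝ)..α, β ^ 2 * g (β * x₁) β (β * x₃))
        + (∫ x₁ in (0:ℝ)..1, ∫ x₂ in (0:ℝ)..1, ∫ β in (0:ℝ)..α,
            β ^ 2 * g (β * x₁) (β * x₂) β) := by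
    rw [intAdd3 (by fun_prop) (by fun_prop) (by fun_prop)]
    simp
  -- evaluate the three terms
  have hTA : (∫ x₂ in (0:ℝ)..1, ∫ x₃ in (0:ℝ)..1, ∫ β in (0:ℝ)..α,
        β ^ 2 * g β (β * x₂) (β * x₃))
      = ∫ c in (0:ℝ)..α, D₁ c := by
    calc (∫ x₂ in (0:ℝ)..1, ∫ x₃ in (0:ℝ)..1, ∫ β in (0:ℝ)..α, β ^ 2 * g β (β * x₂) (β * x₃))
        = ∫ x₂ in (0:ℝ)..1, ∫ β in (0:ℝ)..α, β * ∫ w in (0:ℝ)..β, g β (β * x₂) w :=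
          intervalIntegral.integral_congr fun x₂ _ =>
            swapScale2 (k := fun b u => g b (b * x₂) u) (by fun_prop) hα'
      _ = ∫ β in (0:ℝ)..α, ∫ u in (0:ℝ)..β, ∫ w in (0:ℝ)..β, g β u w :=
          swapScale (k := fun b u => ∫ w in (0:ℝ)..b, g b u w) (by fun_prop) hα'
      _ = ∫ c in (0:ℝ)..α, D₁ c := by
          apply intervalIntegral.integral_congr
          intro β hβ
          rw [uIcc_of_le hα'] at hβ
          show (∫ u in (0:ℝ)..β, ∫ w in (0:ℝ)..β, g β u w) = D₁ β
          simp only [hD₁]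
          exact swapRect (F := fun u w => g β u w) (by fun_prop) hβ.1 hβ.1
  have hTB : (∫ x₁ in (0:ℝ)..1, ∫ x₃ in (0:ℝ)..1, ∫ β in (0:ℝ)..α,
        β ^ 2 * g (β * x₁) β (β * x₃))
      = ∫ c in (0:ℝ)..α, D₂ c := by
    calc (∫ x₁ in (0:ℝ)..1, ∫ x₃ in (0:ℝ)..1, ∫ β in (0:ℝ)..α, β ^ 2 * g (β * x₁) β (β * x₃))
        = ∫ x₁ in (0:ℝ)..1, ∫ β in (0:ℝ)..α, β * ∫ w in (0:ℝ)..β, g (β * x₁) β w :=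
          intervalIntegral.integral_congr fun x₁ _ =>
            swapScale2 (k := fun b u => g (b * x₁) b u) (by fun_prop) hα'
      _ = ∫ β in (0:ℝ)..α, ∫ u in (0:ℝ)..β, ∫ w in (0:ℝ)..β, g u β w :=
          swapScale (k := fun b u => ∫ w in (0:ℝ)..b, g u b w) (by fun_prop) hα'
      _ = ∫ c in (0:ℝ)..α, D₂ c := by
          apply intervalIntegral.integral_congr
          intro β hβ
          rw [uIcc_of_le hα'] at hβ
          show (∫ u in (0:ℝ)..β, ∫ w in (0:ℝ)..β, g u β w) = D₂ β
          simp only [hD₂]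
          exact swapRect (F := fun u w => g u β w) (by fun_prop) hβ.1 hβ.1
  have hTC : (∫ x₁ in (0:ℝ)..1, ∫ x₂ in (0:ℝ)..1, ∫ β in (0:ℝ)..α,
        β ^ 2 * g (β * x₁) (β * x₂) β)
      = ∫ c in (0:ℝ)..α, D₃ c := by
    calc (∫ x₁ in (0:ℝ)..1, ∫ x₂ in (0:ℝ)..1, ∫ β in (0:ℝ)..α, β ^ 2 * g (β * x₁) (β * x₂) β)
        = ∫ x₁ in (0:ℝ)..1, ∫ β in (0:ℝ)..α, β * ∫ v in (0:ℝ)..β, g (β * x₁) v β :=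
          intervalIntegral.integral_congr fun x₁ _ =>
            swapScale2 (k := fun b u => g (b * x₁) u b) (by fun_prop) hα'
      _ = ∫ β in (0:ℝ)..α, ∫ u in (0:ℝ)..β, ∫ v in (0:ℝ)..β, g u v β :=
          swapScale (k := fun b u => ∫ v in (0:ℝ)..b, g u v b) (by fun_prop) hα'
      _ = ∫ c in (0:ℝ)..α, D₃ c := by
          apply intervalIntegral.integral_congr
          intro β hβ
          rw [uIcc_of_le hα'] at hβ
          show (∫ u in (0:ℝ)..β, ∫ v in (0:ℝ)..β, g u v β) = D₃ β
          simp only [hD₃]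
          exact swapRect (F := fun u v => g u v β) (by fun_prop) hβ.1 hβ.1
  -- assemble the right-hand side
  have hRHS : (∫ x₁ in (0:ℝ)..1, ∫ x₂ in (0:ℝ)..1, ∫ x₃ in (0:ℝ)..1, ∫ β in (0:ℝ)..α,
        β ^ 2 * (g β (β * x₂) (β * x₃) + g (β * x₁) β (β * x₃) + g (β * x₁) (β * x₂) β))
      = ∫ c in (0:ℝ)..α, (D₃ c + (D₂ c + D₁ c)) := by
    calc (∫ x₁ in (0:ℝ)..1, ∫ x₂ in (0:ℝ)..1, ∫ x₃ in (0:ℝ)..1, ∫ β in (0:ℝ)..α,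
          β ^ 2 * (g β (β * x₂) (β * x₃) + g (β * x₁) β (β * x₃) + g (β * x₁) (β * x₂) β))
        = ∫ x₁ in (0:ℝ)..1, ∫ x₂ in (0:ℝ)..1, ∫ x₃ in (0:ℝ)..1,
            ((∫ β in (0:ℝ)..α, β ^ 2 * g β (β * x₂) (β * x₃))
              + (∫ β in (0:ℝ)..α, β ^ 2 * g (β * x₁) β (β * x₃))
              + (∫ β in (0:ℝ)..α, β ^ 2 * g (β * x₁) (β * x₂) β)) :=
          intervalIntegral.integral_congr fun x₁ _ =>
            intervalIntegral.integral_congr fun x₂ _ =>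
              intervalIntegral.integral_congr fun x₃ _ => hsplitβ x₁ x₂ x₃
      _ = ∫ x₁ in (0:ℝ)..1, ∫ x₂ in (0:ℝ)..1,
            ((∫ x₃ in (0:ℝ)..1, ∫ β in (0:ℝ)..α, β ^ 2 * g β (β * x₂) (β * x₃))
              + (∫ x₃ in (0:ℝ)..1, ∫ β in (0:ℝ)..α, β ^ 2 * g (β * x₁) β (β * x₃))
              + (∫ β in (0:ℝ)..α, β ^ 2 * g (β * x₁) (β * x₂) β)) :=
          intervalIntegral.integral_congr fun x₁ _ =>
            intervalIntegral.integral_congr fun x₂ _ => hsplit3 x₁ x₂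
      _ = ∫ x₁ in (0:ℝ)..1,
            ((∫ x₂ in (0:ℝ)..1, ∫ x₃ in (0:ℝ)..1, ∫ β in (0:ℝ)..α,
                β ^ 2 * g β (β * x₂) (β * x₃))
              + (∫ x₃ in (0:ℝ)..1, ∫ β in (0:ℝ)..α, β ^ 2 * g (β * x₁) β (β * x₃))
              + (∫ x₂ in (0:ℝ)..1, ∫ β in (0:ℝ)..α, β ^ 2 * g (β * x₁) (β * x₂) β)) :=
          intervalIntegral.integral_congr fun x₁ _ => hsplit2 x₁
      _ = (∫ x₂ in (0:ℝ)..1, ∫ x₃ in (0:ℝ)..1, ∫ β in (0:ℝ)..α, β ^ 2 * g β (β * x₂) (β * x₃))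
            + (∫ x₁ in (0:ℝ)..1, ∫ x₃ in (0:ℝ)..1, ∫ β in (0:ℝ)..α,
                β ^ 2 * g (β * x₁) β (β * x₃))
            + (∫ x₁ in (0:ℝ)..1, ∫ x₂ in (0:ℝ)..1, ∫ β in (0:ℝ)..α,
                β ^ 2 * g (β * x₁) (β * x₂) β) := hsplit1
      _ = (∫ c in (0:ℝ)..α, D₁ c) + (∫ c in (0:ℝ)..α, D₂ c) + (∫ c in (0:ℝ)..α, D₃ c) := by
          rw [hTA, hTB, hTC]
      _ = ∫ c in (0:ℝ)..α, (D₃ c + (D₂ c + D₁ c)) := by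
          rw [← intervalIntegral.integral_add (hD₁c.intervalIntegrable _ _)
              (hD₂c.intervalIntegrable _ _),
            ← intervalIntegral.integral_add (show IntervalIntegrable (fun x => D₁ x + D₂ x) volume 0 α from (hD₁c.add hD₂c).intervalIntegrable _ _)
              (hD₃c.intervalIntegrable _ _)]
          exact intervalIntegral.integral_congr fun c _ => by
            show D₁ c + D₂ c + D₃ c = D₃ c + (D₂ c + D₁ c)
            ring
  rw [hLHS, hRHS]

theorem formula_F2_n3 (α : ℝ) (hα : 0 < α) (f : ℝ → ℝ → ℝ → ℝ)
    (hf : ContinuousOn (fun p : ℝ × ℝ × ℝ => f p.1 p.2.1 p.2.2)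
      (Set.Icc 0 α ×ˢ Set.Icc 0 α ×ˢ Set.Icc 0 α)) :
    ∫ x₃ in (0:ℝ)..α, ∫ x₂ in (0:ℝ)..α, ∫ x₁ in (0:ℝ)..α, f x₁ x₂ x₃
      = ∫ x₁ in (0:ℝ)..1, ∫ x₂ in (0:ℝ)..1, ∫ x₃ in (0:ℝ)..1, ∫ β in (0:ℝ)..α,
          β ^ 2 * (f β (β * x₂) (β * x₃) + f (β * x₁) β (β * x₃)
            + f (β * x₁) (β * x₂) β) := by
  -- extend `f` to a continuous function on all of `ℝ³` using the Tietze extension theorem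
  set s : Set (ℝ × ℝ × ℝ) := Set.Icc 0 α ×ˢ Set.Icc 0 α ×ˢ Set.Icc 0 α with hs_def
  have hs : IsClosed s := (isClosed_Icc.prod (isClosed_Icc.prod isClosed_Icc))
  obtain ⟨G, hG⟩ := ContinuousMap.exists_restrict_eq (Y := ℝ) hs
    ⟨s.restrict (fun p : ℝ × ℝ × ℝ => f p.1 p.2.1 p.2.2), hf.restrict⟩
  set g : ℝ → ℝ → ℝ → ℝ := fun x y z => G (x, y, z) with hg_def
  have hg : Continuous fun p : ℝ × ℝ × ℝ => g p.1 p.2.1 p.2.2 := by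
    have := G.continuous
    fun_prop
  have heq : ∀ x y z : ℝ, x ∈ Icc 0 α → y ∈ Icc 0 α → z ∈ Icc 0 α → g x y z = f x y z := by
    intro x y z hx hy hz
    have hmem : (x, y, z) ∈ s := ⟨hx, hy, hz⟩
    have := DFunLike.congr_fun hG (⟨(x, y, z), hmem⟩ : s)
    exact this
  have hIcc : uIcc (0:ℝ) α = Icc 0 α := uIcc_of_le hα.le
  have hIcc1 : uIcc (0:ℝ) 1 = Icc 0 1 := uIcc_of_le zero_le_one
  have hL : (∫ x₃ in (0:ℝ)..α, ∫ x₂ in (0:ℝ)..α, ∫ x₁ in (0:ℝ)..α, f x₁ x₂ x₃)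
      = ∫ x₃ in (0:ℝ)..α, ∫ x₂ in (0:ℝ)..α, ∫ x₁ in (0:ℝ)..α, g x₁ x₂ x₃ := by
    apply intervalIntegral.integral_congr
    intro x₃ hx₃
    rw [hIcc] at hx₃
    apply intervalIntegral.integral_congr
    intro x₂ hx₂
    rw [hIcc] at hx₂
    apply intervalIntegral.integral_congr
    intro x₁ hx₁
    rw [hIcc] at hx₁
    exact (heq x₁ x₂ x₃ hx₁ hx₂ hx₃).symm
  have hmul : ∀ β x : ℝ, β ∈ Icc 0 α → x ∈ Icc 0 1 → β * x ∈ Icc 0 α := by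
    intro β x hβ hx
    constructor
    · exact mul_nonneg hβ.1 hx.1
    · exact le_trans (mul_le_of_le_one_right hβ.1 hx.2) hβ.2
  have hR : (∫ x₁ in (0:ℝ)..1, ∫ x₂ in (0:ℝ)..1, ∫ x₃ in (0:ℝ)..1, ∫ β in (0:ℝ)..α,
        β ^ 2 * (f β (β * x₂) (β * x₃) + f (β * x₁) β (β * x₃) + f (β * x₁) (β * x₂) β))
      = ∫ x₁ in (0:ℝ)..1, ∫ x₂ in (0:ℝ)..1, ∫ x₃ in (0:ℝ)..1, ∫ β in (0:ℝ)..α,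
        β ^ 2 * (g β (β * x₂) (β * x₃) + g (β * x₁) β (β * x₃) + g (β * x₁) (β * x₂) β) := by
    apply intervalIntegral.integral_congr
    intro x₁ hx₁
    rw [hIcc1] at hx₁
    apply intervalIntegral.integral_congr
    intro x₂ hx₂
    rw [hIcc1] at hx₂
    apply intervalIntegral.integral_congr
    intro x₃ hx₃
    rw [hIcc1] at hx₃
    apply intervalIntegral.integral_congr
    intro β hβ
    rw [hIcc] at hβ
    show β ^ 2 * (f β (β * x₂) (β * x₃) + f (β * x₁) β (β * x₃) + f (β * x₁) (β * x₂) β)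
      = β ^ 2 * (g β (β * x₂) (β * x₃) + g (β * x₁) β (β * x₃) + g (β * x₁) (β * x₂) β)
    rw [heq β (β * x₂) (β * x₃) hβ (hmul β x₂ hβ hx₂) (hmul β x₃ hβ hx₃),
      heq (β * x₁) β (β * x₃) (hmul β x₁ hβ hx₁) hβ (hmul β x₃ hβ hx₃),
      heq (β * x₁) (β * x₂) β (hmul β x₁ hβ hx₁) (hmul β x₂ hβ hx₂) hβ]
  rw [hL, hR]
  exact keyLemma g hg α hα
end

section
/- Cube formula: Let α > 0 and let g : ℝ → ℝ be continuous on [0,α]. Then (∫₀^α g(x) dx)³ = 6 · ∫₀¹ ∫₀¹ ∫₀^α γ² · β · g(γ) · g(γ·β) · g(γ·β·x) dγ dβ dx. -/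
open Real Set MeasureTheory intervalIntegral

lemma my_scale (h : ℝ → ℝ) (c : ℝ) :
    (∫ t in (0:ℝ)..1, c * h (c*t)) = ∫ v in (0:ℝ)..c, h v := by
  have := intervalIntegral.smul_integral_comp_mul_left (a := (0:ℝ)) (b := 1) h c
  simpa [intervalIntegral.integral_const_mul] using this

lemma my_swap (f : ℝ → ℝ → ℝ) (hf : Continuous (Function.uncurry f)) {a b c d : ℝ}
    (hab : a ≤ b) (hcd : c ≤ d) :
    (∫ x in a..b, ∫ y in c..d, f x y) = ∫ y in c..d, ∫ x in a..b, f x y := by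
  have hint : Integrable (Function.uncurry f)
      ((volume.restrict (Ioc a b)).prod (volume.restrict (Ioc c d))) := by
    rw [Measure.prod_restrict, ← Measure.volume_eq_prod]
    exact (hf.continuousOn.integrableOn_compact (isCompact_Icc.prod isCompact_Icc)).mono_set
      (prod_mono Ioc_subset_Icc_self Ioc_subset_Icc_self)
  simp only [intervalIntegral.integral_of_le hab, intervalIntegral.integral_of_le hcd]
  exact MeasureTheory.integral_integral_swap hint

theorem cube_formula_cont (α : ℝ) (hα : 0 ≤ α) (g : ℝ → ℝ) (hg : Continuous g) :
    (∫ x in (0:ℝ)..α, g x) ^ 3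
      = 6 * ∫ x in (0:ℝ)..1, ∫ β in (0:ℝ)..1, ∫ γ in (0:ℝ)..α,
          γ ^ 2 * β * g γ * g (γ * β) * g (γ * β * x) := by
  set G : ℝ → ℝ := fun t => ∫ s in (0:ℝ)..t, g s with hGdef
  have hG : ∀ t, HasDerivAt G (g t) t := fun t =>
    intervalIntegral.integral_hasDerivAt_right (hg.intervalIntegrable 0 t)
      (hg.aestronglyMeasurable.stronglyMeasurableAtFilter) hg.continuousAt
  have hGc : Continuous G := continuous_iff_continuousAt.2 fun t => (hG t).continuousAt
  have hG0 : G 0 = 0 := intervalIntegral.integral_same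
  have ftc2 : ∀ t : ℝ, (∫ v in (0:ℝ)..t, g v * G v) = G t ^ 2 / 2 := by
    intro t
    have h := intervalIntegral.integral_eq_sub_of_hasDerivAt
      (f := fun u => G u ^ 2 / 2) (f' := fun u => g u * G u)
      (fun u _ => by
        have := ((hG u).pow 2).div_const 2
        simp only [Pi.pow_apply] at this; exact this.congr_deriv (by norm_num [pow_succ]; ring))
      ((hg.mul hGc).intervalIntegrable 0 t)
    rw [h]; show G t ^ 2 / 2 - G 0 ^ 2 / 2 = G t ^ 2 / 2; rw [hG0]; ring
  have ftc3 : (∫ v in (0:ℝ)..α, g v * (G v ^ 2 / 2)) = G α ^ 3 / 6 := by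
    have h := intervalIntegral.integral_eq_sub_of_hasDerivAt
      (f := fun u => G u ^ 3 / 6) (f' := fun u => g u * (G u ^ 2 / 2))
      (fun u _ => by
        have := ((hG u).pow 3).div_const 6
        simp only [Pi.pow_apply] at this; exact this.congr_deriv (by norm_num [pow_succ]; ring))
      ((hg.mul ((hGc.pow 2).div_const 2)).intervalIntegrable 0 α)
    rw [h]; show G α ^ 3 / 6 - G 0 ^ 3 / 6 = G α ^ 3 / 6; rw [hG0]; ring
  have step1 : ∀ x : ℝ,
      (∫ β in (0:ℝ)..1, ∫ γ in (0:ℝ)..α, γ ^ 2 * β * g γ * g (γ * β) * g (γ * β * x))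
        = ∫ γ in (0:ℝ)..α, g γ * ∫ v in (0:ℝ)..γ, v * g v * g (v * x) := by
    intro x
    rw [my_swap (fun β γ => γ ^ 2 * β * g γ * g (γ * β) * g (γ * β * x)) (by fun_prop)
      zero_le_one hα]
    refine intervalIntegral.integral_congr fun γ hγ => ?_
    rw [← my_scale (fun v => v * g v * g (v * x)) γ, ← intervalIntegral.integral_const_mul]
    exact intervalIntegral.integral_congr fun β hβ => by ring
  have hH : Continuous fun p : ℝ × ℝ => ∫ v in (0:ℝ)..p.2, v * g v * g (v * p.1) :=
    intervalIntegral.continuous_parametric_intervalIntegral_of_continuous (by fun_prop)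
      continuous_snd
  have step2 : (∫ x in (0:ℝ)..1, ∫ γ in (0:ℝ)..α, g γ * ∫ v in (0:ℝ)..γ, v * g v * g (v * x))
      = ∫ γ in (0:ℝ)..α, g γ * (G γ ^ 2 / 2) := by
    rw [my_swap (fun x γ => g γ * ∫ v in (0:ℝ)..γ, v * g v * g (v * x))
      ((hg.comp continuous_snd).mul hH) zero_le_one hα]
    refine intervalIntegral.integral_congr fun γ hγ => ?_
    rw [uIcc_of_le hα] at hγ
    rw [intervalIntegral.integral_const_mul]
    congr 1
    rw [my_swap (fun x v => v * g v * g (v * x)) (by fun_prop) zero_le_one hγ.1, ← ftc2 γ]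
    refine intervalIntegral.integral_congr fun v hv => ?_
    have h1 : (∫ x in (0:ℝ)..1, v * g v * g (v * x))
        = g v * ∫ x in (0:ℝ)..1, v * g (v * x) := by
      rw [← intervalIntegral.integral_const_mul]
      exact intervalIntegral.integral_congr fun x hx => by ring
    rw [h1, my_scale (fun u => g u) v]
  calc (∫ x in (0:ℝ)..α, g x) ^ 3 = G α ^ 3 := rfl
    _ = 6 * (G α ^ 3 / 6) := by ring
    _ = _ := by
        rw [← ftc3, ← step2]
        congr 1
        exact (intervalIntegral.integral_congr fun x hx => step1 x).symm

theorem cube_formula (α : ℝ) (hα : 0 < α) (g : ℝ → ℝ)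
    (hg : ContinuousOn g (Set.Icc 0 α)) :
    (∫ x in (0:ℝ)..α, g x) ^ 3
      = 6 * ∫ x in (0:ℝ)..1, ∫ β in (0:ℝ)..1, ∫ γ in (0:ℝ)..α,
          γ ^ 2 * β * g γ * g (γ * β) * g (γ * β * x) := by
  set g1 : ℝ → ℝ := fun t => g (max 0 (min t α)) with hg1def
  have hg1 : Continuous g1 :=
    hg.comp_continuous (continuous_const.max (continuous_id.min continuous_const))
      (fun t => ⟨le_max_left _ _, max_le hα.le (min_le_right t α)⟩)
  have hEq : ∀ t ∈ Icc (0:ℝ) α, g t = g1 t := by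
    intro t ht
    simp only [hg1def]
    rw [min_eq_left ht.2, max_eq_right ht.1]
  have hL : (∫ x in (0:ℝ)..α, g x) = ∫ x in (0:ℝ)..α, g1 x := by
    refine intervalIntegral.integral_congr fun t ht => ?_
    rw [uIcc_of_le hα.le] at ht
    exact hEq t ht
  have hR : (∫ x in (0:ℝ)..1, ∫ β in (0:ℝ)..1, ∫ γ in (0:ℝ)..α,
        γ ^ 2 * β * g γ * g (γ * β) * g (γ * β * x))
      = ∫ x in (0:ℝ)..1, ∫ β in (0:ℝ)..1, ∫ γ in (0:ℝ)..α,
        γ ^ 2 * β * g1 γ * g1 (γ * β) * g1 (γ * β * x) := by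
    refine intervalIntegral.integral_congr fun x hx => ?_
    rw [uIcc_of_le (zero_le_one)] at hx
    refine intervalIntegral.integral_congr fun β hβ => ?_
    rw [uIcc_of_le (zero_le_one)] at hβ
    refine intervalIntegral.integral_congr fun γ hγ => ?_
    rw [uIcc_of_le hα.le] at hγ
    have h1 : γ * β ∈ Icc (0:ℝ) α := by
      constructor
      · exact mul_nonneg hγ.1 hβ.1
      · nlinarith [hγ.1, hγ.2, hβ.1, hβ.2]
    have h2 : γ * β * x ∈ Icc (0:ℝ) α := by
      constructor
      · exact mul_nonneg h1.1 hx.1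
      · nlinarith [h1.1, h1.2, hx.1, hx.2]
    rw [hEq γ hγ, hEq _ h1, hEq _ h2]
  rw [hL, hR]
  exact cube_formula_cont α hα.le g1 hg1
end

section
/- Fourth-power formula (1): Let α > 0 and let g : ℝ → ℝ be continuous on [0,α]. Then (∫₀^α g(x) dx)⁴ = 24 · ∫₀¹ ∫₀¹ ∫₀¹ ∫₀^α δ³ · γ² · β · g(δ) · g(δ·γ) · g(δ·γ·β) · g(δ·γ·β·x) dδ dγ dβ dx. -/
open Real Set MeasureTheory

noncomputable section FourthPowerAux

namespace FourthPowerAux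

/-- The integrand of the quadruple integral. -/
def core (g : ℝ → ℝ) (x β γ δ : ℝ) : ℝ :=
  δ ^ 3 * γ ^ 2 * β * g δ * g (δ * γ) * g (δ * γ * β) * g (δ * γ * β * x)

/-- The primitive of `g`. -/
def Gg (g : ℝ → ℝ) (t : ℝ) : ℝ := ∫ s in (0:ℝ)..t, g s

lemma Gg_cont {g : ℝ → ℝ} (hg : Continuous g) : Continuous (Gg g) :=
  intervalIntegral.continuous_primitive (fun a b => hg.intervalIntegrable a b) 0

lemma Gg_deriv {g : ℝ → ℝ} (hg : Continuous g) (t : ℝ) : HasDerivAt (Gg g) (g t) t :=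
  intervalIntegral.integral_hasDerivAt_right (hg.intervalIntegrable _ _)
    (hg.stronglyMeasurable.stronglyMeasurableAtFilter) hg.continuousAt

/-- Fubini for interval integrals of jointly continuous functions on `[0,a] × [0,b]`. -/
lemma my_swap {F : ℝ → ℝ → ℝ} (hF : Continuous fun p : ℝ × ℝ => F p.1 p.2) {a b : ℝ}
    (ha : 0 ≤ a) (hb : 0 ≤ b) :
    (∫ x in (0:ℝ)..a, ∫ y in (0:ℝ)..b, F x y) = ∫ y in (0:ℝ)..b, ∫ x in (0:ℝ)..a, F x y := by
  simp_rw [intervalIntegral.integral_of_le ha, intervalIntegral.integral_of_le hb]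
  apply MeasureTheory.integral_integral_swap
  show Integrable (fun p : ℝ × ℝ => F p.1 p.2)
    ((volume.restrict (Ioc 0 a)).prod (volume.restrict (Ioc 0 b)))
  rw [MeasureTheory.Measure.prod_restrict]
  have h1 : IntegrableOn (fun p : ℝ × ℝ => F p.1 p.2) (Icc 0 a ×ˢ Icc 0 b)
      (volume.prod volume) :=
    hF.continuousOn.integrableOn_compact (isCompact_Icc.prod isCompact_Icc)
  exact h1.mono_set (prod_mono Ioc_subset_Icc_self Ioc_subset_Icc_self)

/-- Scaling substitution. -/
lemma scale (F : ℝ → ℝ) (c : ℝ) :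
    c * ∫ x in (0:ℝ)..1, F (c * x) = ∫ t in (0:ℝ)..c, F t := by
  simpa using intervalIntegral.smul_integral_comp_mul_left (a := 0) (b := 1) F c

lemma ftc_pow {g : ℝ → ℝ} (hg : Continuous g) (n : ℕ) (c : ℝ) :
    ∫ t in (0:ℝ)..c, g t * Gg g t ^ n = Gg g c ^ (n + 1) / (n + 1) := by
  have hd : ∀ t ∈ uIcc (0:ℝ) c,
      HasDerivAt (fun u => Gg g u ^ (n + 1) / ((n : ℝ) + 1)) (g t * Gg g t ^ n) t := by
    intro t _
    have h := ((Gg_deriv hg t).pow (n + 1)).div_const ((n : ℝ) + 1)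
    refine h.congr_deriv ?_
    have hne : ((n : ℝ) + 1) ≠ 0 := by positivity
    push_cast
    field_simp
  rw [intervalIntegral.integral_eq_sub_of_hasDerivAt hd
    ((hg.mul ((Gg_cont hg).pow n)).intervalIntegrable _ _)]
  have h0 : Gg g 0 = 0 := intervalIntegral.integral_same
  rw [h0]
  simp

lemma key (α : ℝ) (hα : 0 < α) (g : ℝ → ℝ) (hg : Continuous g) :
    (∫ x in (0:ℝ)..α, g x) ^ 4
      = 24 * ∫ x in (0:ℝ)..1, ∫ β in (0:ℝ)..1, ∫ γ in (0:ℝ)..1, ∫ δ in (0:ℝ)..α,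
          core g x β γ δ := by
  have h01 : (0:ℝ) ≤ 1 := zero_le_one
  have hα' : (0:ℝ) ≤ α := hα.le
  -- continuity facts
  have hc2 : ∀ (u v : ℝ → ℝ × ℝ × ℝ × ℝ), False → True := fun _ _ _ => trivial
  have hcore4 : Continuous fun p : ℝ × ℝ × ℝ × ℝ => core g p.1 p.2.1 p.2.2.1 p.2.2.2 := by
    unfold core; fun_prop
  -- parametric continuity
  have hpγ : ∀ x : ℝ, Continuous fun p : ℝ × ℝ => ∫ γ in (0:ℝ)..1, core g x p.1 γ p.2 := by
    intro x
    apply intervalIntegral.continuous_parametric_intervalIntegral_of_continuous'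
      (f := fun (p : ℝ × ℝ) γ => core g x p.1 γ p.2)
    show Continuous fun q : (ℝ × ℝ) × ℝ => core g x q.1.1 q.2 q.1.2
    unfold core; fun_prop
  have hpβγ : Continuous fun p : ℝ × ℝ =>
      ∫ β in (0:ℝ)..1, ∫ γ in (0:ℝ)..1, core g p.1 β γ p.2 := by
    apply intervalIntegral.continuous_parametric_intervalIntegral_of_continuous'
      (f := fun (p : ℝ × ℝ) β => ∫ γ in (0:ℝ)..1, core g p.1 β γ p.2)
    show Continuous fun q : (ℝ × ℝ) × ℝ => ∫ γ in (0:ℝ)..1, core g q.1.1 q.2 γ q.1.2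
    apply intervalIntegral.continuous_parametric_intervalIntegral_of_continuous'
      (f := fun (q : (ℝ × ℝ) × ℝ) γ => core g q.1.1 q.2 γ q.1.2)
    show Continuous fun r : ((ℝ × ℝ) × ℝ) × ℝ => core g r.1.1.1 r.1.2 r.2 r.1.1.2
    unfold core; fun_prop
  have hpβ : ∀ δ : ℝ, Continuous fun p : ℝ × ℝ =>
      ∫ β in (0:ℝ)..1, core g p.1 β p.2 δ := by
    intro δ
    apply intervalIntegral.continuous_parametric_intervalIntegral_of_continuous'
      (f := fun (p : ℝ × ℝ) β => core g p.1 β p.2 δ)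
    show Continuous fun q : (ℝ × ℝ) × ℝ => core g q.1.1 q.2 q.1.2 δ
    unfold core; fun_prop
  -- reorder the integrals
  have swap_all :
      (∫ x in (0:ℝ)..1, ∫ β in (0:ℝ)..1, ∫ γ in (0:ℝ)..1, ∫ δ in (0:ℝ)..α, core g x β γ δ)
        = ∫ δ in (0:ℝ)..α, ∫ γ in (0:ℝ)..1, ∫ β in (0:ℝ)..1, ∫ x in (0:ℝ)..1,
            core g x β γ δ := by
    calc
      (∫ x in (0:ℝ)..1, ∫ β in (0:ℝ)..1, ∫ γ in (0:ℝ)..1, ∫ δ in (0:ℝ)..α, core g x β γ δ)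
          = ∫ x in (0:ℝ)..1, ∫ β in (0:ℝ)..1, ∫ δ in (0:ℝ)..α, ∫ γ in (0:ℝ)..1,
              core g x β γ δ := by
        refine intervalIntegral.integral_congr fun x _ => ?_
        refine intervalIntegral.integral_congr fun β _ => ?_
        exact my_swap (F := fun γ δ => core g x β γ δ)
          (by unfold core; fun_prop) h01 hα'
      _ = ∫ x in (0:ℝ)..1, ∫ δ in (0:ℝ)..α, ∫ β in (0:ℝ)..1, ∫ γ in (0:ℝ)..1,
              core g x β γ δ := by
        refine intervalIntegral.integral_congr fun x _ => ?_
        exact my_swap (F := fun β δ => ∫ γ in (0:ℝ)..1, core g x β γ δ) (hpγ x) h01 hα'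
      _ = ∫ δ in (0:ℝ)..α, ∫ x in (0:ℝ)..1, ∫ β in (0:ℝ)..1, ∫ γ in (0:ℝ)..1,
              core g x β γ δ := by
        exact my_swap
          (F := fun x δ => ∫ β in (0:ℝ)..1, ∫ γ in (0:ℝ)..1, core g x β γ δ) hpβγ h01 hα'
      _ = ∫ δ in (0:ℝ)..α, ∫ x in (0:ℝ)..1, ∫ γ in (0:ℝ)..1, ∫ β in (0:ℝ)..1,
              core g x β γ δ := by
        refine intervalIntegral.integral_congr fun δ _ => ?_
        refine intervalIntegral.integral_congr fun x _ => ?_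
        exact my_swap (F := fun β γ => core g x β γ δ)
          (by unfold core; fun_prop) h01 h01
      _ = ∫ δ in (0:ℝ)..α, ∫ γ in (0:ℝ)..1, ∫ x in (0:ℝ)..1, ∫ β in (0:ℝ)..1,
              core g x β γ δ := by
        refine intervalIntegral.integral_congr fun δ _ => ?_
        exact my_swap (F := fun x γ => ∫ β in (0:ℝ)..1, core g x β γ δ) (hpβ δ) h01 h01
      _ = ∫ δ in (0:ℝ)..α, ∫ γ in (0:ℝ)..1, ∫ β in (0:ℝ)..1, ∫ x in (0:ℝ)..1,
              core g x β γ δ := by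
        refine intervalIntegral.integral_congr fun δ _ => ?_
        refine intervalIntegral.integral_congr fun γ _ => ?_
        exact my_swap (F := fun x β => core g x β γ δ)
          (by unfold core; fun_prop) h01 h01
  -- evaluate the reordered integral
  have hx : ∀ δ γ β : ℝ, (∫ x in (0:ℝ)..1, core g x β γ δ)
      = δ ^ 2 * γ * g δ * g (δ * γ) * (g (δ * γ * β) * Gg g (δ * γ * β)) := by
    intro δ γ β
    have h1 : (∫ x in (0:ℝ)..1, core g x β γ δ)
        = (δ ^ 3 * γ ^ 2 * β * g δ * g (δ * γ) * g (δ * γ * β))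
            * ∫ x in (0:ℝ)..1, g (δ * γ * β * x) := by
      unfold core
      exact intervalIntegral.integral_const_mul _ _
    have hs : δ * γ * β * (∫ x in (0:ℝ)..1, g (δ * γ * β * x))
        = ∫ t in (0:ℝ)..(δ * γ * β), g t := by
      simpa using scale g (δ * γ * β)
    have hGdef : Gg g (δ * γ * β) = ∫ t in (0:ℝ)..(δ * γ * β), g t := rfl
    rw [h1, hGdef, ← hs]
    ring
  have hβ : ∀ δ γ : ℝ,
      (∫ β in (0:ℝ)..1, δ ^ 2 * γ * g δ * g (δ * γ) * (g (δ * γ * β) * Gg g (δ * γ * β)))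
        = δ * g δ * g (δ * γ) * (Gg g (δ * γ) ^ 2 / 2) := by
    intro δ γ
    rw [intervalIntegral.integral_const_mul]
    have hs : δ * γ * (∫ β in (0:ℝ)..1, g (δ * γ * β) * Gg g (δ * γ * β))
        = ∫ t in (0:ℝ)..(δ * γ), g t * Gg g t := by
      simpa using scale (fun t => g t * Gg g t) (δ * γ)
    have hft : (∫ t in (0:ℝ)..(δ * γ), g t * Gg g t) = Gg g (δ * γ) ^ 2 / 2 := by
      have h := ftc_pow hg 1 (δ * γ)
      norm_num at h
      convert h using 2
    calc δ ^ 2 * γ * g δ * g (δ * γ) * ∫ β in (0:ℝ)..1, g (δ * γ * β) * Gg g (δ * γ * β)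
        = δ * g δ * g (δ * γ)
            * (δ * γ * ∫ β in (0:ℝ)..1, g (δ * γ * β) * Gg g (δ * γ * β)) := by ring
      _ = δ * g δ * g (δ * γ) * (∫ t in (0:ℝ)..(δ * γ), g t * Gg g t) := by rw [hs]
      _ = δ * g δ * g (δ * γ) * (Gg g (δ * γ) ^ 2 / 2) := by rw [hft]
  have hγ : ∀ δ : ℝ,
      (∫ γ in (0:ℝ)..1, δ * g δ * (g (δ * γ) * Gg g (δ * γ) ^ 2 / 2))
        = g δ * Gg g δ ^ 3 / 6 := by
    intro δ
    have h1 : (fun γ => δ * g δ * (g (δ * γ) * Gg g (δ * γ) ^ 2 / 2))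
        = fun γ => (δ * g δ / 2) * (g (δ * γ) * Gg g (δ * γ) ^ 2) := by
      funext γ; ring
    rw [h1, intervalIntegral.integral_const_mul]
    have hs : δ * (∫ γ in (0:ℝ)..1, g (δ * γ) * Gg g (δ * γ) ^ 2)
        = ∫ t in (0:ℝ)..δ, g t * Gg g t ^ 2 := by
      simpa using scale (fun t => g t * Gg g t ^ 2) δ
    have hft : (∫ t in (0:ℝ)..δ, g t * Gg g t ^ 2) = Gg g δ ^ 3 / 3 := by
      have h := ftc_pow hg 2 δ
      norm_num at h
      convert h using 2
    calc δ * g δ / 2 * ∫ γ in (0:ℝ)..1, g (δ * γ) * Gg g (δ * γ) ^ 2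
        = g δ / 2 * (δ * ∫ γ in (0:ℝ)..1, g (δ * γ) * Gg g (δ * γ) ^ 2) := by ring
      _ = g δ / 2 * (∫ t in (0:ℝ)..δ, g t * Gg g t ^ 2) := by rw [hs]
      _ = g δ * Gg g δ ^ 3 / 6 := by rw [hft]; ring
  have hδ : (∫ δ in (0:ℝ)..α, g δ * Gg g δ ^ 3 / 6) = Gg g α ^ 4 / 24 := by
    have h1 : (fun δ => g δ * Gg g δ ^ 3 / 6)
        = fun δ => (1 / 6 : ℝ) * (g δ * Gg g δ ^ 3) := by funext δ; ring
    rw [h1, intervalIntegral.integral_const_mul]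
    have hft : (∫ t in (0:ℝ)..α, g t * Gg g t ^ 3) = Gg g α ^ 4 / 4 := by
      have h := ftc_pow hg 3 α
      norm_num at h
      convert h using 2
    rw [hft]; ring
  have hT : (∫ δ in (0:ℝ)..α, ∫ γ in (0:ℝ)..1, ∫ β in (0:ℝ)..1, ∫ x in (0:ℝ)..1,
      core g x β γ δ) = Gg g α ^ 4 / 24 := by
    calc (∫ δ in (0:ℝ)..α, ∫ γ in (0:ℝ)..1, ∫ β in (0:ℝ)..1, ∫ x in (0:ℝ)..1,
        core g x β γ δ)
        = ∫ δ in (0:ℝ)..α, ∫ γ in (0:ℝ)..1, ∫ β in (0:ℝ)..1,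
            δ ^ 2 * γ * g δ * g (δ * γ) * (g (δ * γ * β) * Gg g (δ * γ * β)) := by
          refine intervalIntegral.integral_congr fun δ _ => ?_
          refine intervalIntegral.integral_congr fun γ _ => ?_
          refine intervalIntegral.integral_congr fun β _ => ?_
          exact hx δ γ β
      _ = ∫ δ in (0:ℝ)..α, ∫ γ in (0:ℝ)..1,
            δ * g δ * (g (δ * γ) * Gg g (δ * γ) ^ 2 / 2) := by
          refine intervalIntegral.integral_congr fun δ _ => ?_
          refine intervalIntegral.integral_congr fun γ _ => ?_
          rw [hβ δ γ]; ring
      _ = ∫ δ in (0:ℝ)..α, g δ * Gg g δ ^ 3 / 6 := by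
          refine intervalIntegral.integral_congr fun δ _ => ?_
          exact hγ δ
      _ = Gg g α ^ 4 / 24 := hδ
  rw [swap_all, hT]
  show Gg g α ^ 4 = 24 * (Gg g α ^ 4 / 24)
  ring

end FourthPowerAux

end FourthPowerAux

open FourthPowerAux in
theorem fourth_power_formula (α : ℝ) (hα : 0 < α) (g : ℝ → ℝ)
    (hg : ContinuousOn g (Set.Icc 0 α)) :
    (∫ x in (0:ℝ)..α, g x) ^ 4
      = 24 * ∫ x in (0:ℝ)..1, ∫ β in (0:ℝ)..1, ∫ γ in (0:ℝ)..1, ∫ δ in (0:ℝ)..α,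
          δ ^ 3 * γ ^ 2 * β * g δ * g (δ * γ) * g (δ * γ * β) * g (δ * γ * β * x) := by
  have h01 : (0:ℝ) ≤ 1 := zero_le_one
  -- extend `g` to a continuous function on `ℝ`
  obtain ⟨g', hg'⟩ := ContinuousMap.exists_restrict_eq (Y := ℝ)
    (isClosed_Icc (a := (0:ℝ)) (b := α))
    (ContinuousMap.mk _ (continuousOn_iff_continuous_restrict.mp hg))
  have heq : ∀ t ∈ Icc (0:ℝ) α, g' t = g t := by
    intro t ht
    have h := DFunLike.congr_fun hg' (⟨t, ht⟩ : Icc (0:ℝ) α)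
    simpa using h
  have hmul : ∀ {u v : ℝ}, u ∈ Icc (0:ℝ) α → v ∈ Icc (0:ℝ) 1 → u * v ∈ Icc (0:ℝ) α := by
    rintro u v ⟨hu0, huα⟩ ⟨hv0, hv1⟩
    exact ⟨mul_nonneg hu0 hv0, by nlinarith⟩
  have base := key α hα (⇑g') g'.continuous
  have hL : (∫ x in (0:ℝ)..α, g x) = ∫ x in (0:ℝ)..α, g' x :=
    intervalIntegral.integral_congr fun t ht =>
      (heq t (by rwa [uIcc_of_le hα.le] at ht)).symm
  have hR : (∫ x in (0:ℝ)..1, ∫ β in (0:ℝ)..1, ∫ γ in (0:ℝ)..1, ∫ δ in (0:ℝ)..α,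
        core (⇑g') x β γ δ)
      = ∫ x in (0:ℝ)..1, ∫ β in (0:ℝ)..1, ∫ γ in (0:ℝ)..1, ∫ δ in (0:ℝ)..α,
        core g x β γ δ := by
    refine intervalIntegral.integral_congr fun x hxm => ?_
    rw [uIcc_of_le h01] at hxm
    refine intervalIntegral.integral_congr fun β hbm => ?_
    rw [uIcc_of_le h01] at hbm
    refine intervalIntegral.integral_congr fun γ hcm => ?_
    rw [uIcc_of_le h01] at hcm
    refine intervalIntegral.integral_congr fun δ hdm => ?_
    rw [uIcc_of_le hα.le] at hdm
    unfold core
    rw [heq δ hdm, heq _ (hmul hdm hcm), heq _ (hmul (hmul hdm hcm) hbm),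
      heq _ (hmul (hmul (hmul hdm hcm) hbm) hxm)]
  rw [hL, base]
  exact congrArg (fun z => 24 * z) hR
end

section
/- Identity (2): 12 · ∫₀¹ ∫₀¹ ∫₀¹ (γ² · β) / (1 + γ² + γ²·β² + γ²·β²·x²)² dγ dβ dx = π²/16. -/
open Real Set intervalIntegral MeasureTheory

lemma inner_gamma (b x : ℝ) :
    ∫ γ in (0:ℝ)..1, γ ^ 2 * b / (1 + γ ^ 2 + γ ^ 2 * b ^ 2 + γ ^ 2 * b ^ 2 * x ^ 2) ^ 2
      = b * (arctan (Real.sqrt (1+b^2+b^2*x^2)) / (2 * Real.sqrt (1+b^2+b^2*x^2) * (1+b^2+b^2*x^2))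
          - 1 / (2 * (1+b^2+b^2*x^2) * (2+b^2+b^2*x^2))) := by
  have hspos : (0:ℝ) < 1 + b^2 + b^2*x^2 := by positivity
  set s : ℝ := 1 + b^2 + b^2*x^2 with hs
  set a : ℝ := Real.sqrt s with ha
  have ha2 : a^2 = s := Real.sq_sqrt hspos.le
  have hapos : 0 < a := Real.sqrt_pos.mpr hspos
  have key : ∀ γ ∈ uIcc (0:ℝ) 1,
      HasDerivAt (fun γ => b * (arctan (a*γ)/(2*a*s) - γ/(2*s*(1+s*γ^2))))
      (γ ^ 2 * b / (1 + γ ^ 2 + γ ^ 2 * b ^ 2 + γ ^ 2 * b ^ 2 * x ^ 2) ^ 2) γ := by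
    intro γ _
    have hden : (0:ℝ) < 1 + s*γ^2 := by positivity
    have h1 : HasDerivAt (fun γ : ℝ => arctan (a*γ)) (1 / (1+(a*γ)^2) * a) γ :=
      by simpa [Function.comp_def] using (Real.hasDerivAt_arctan (a*γ)).comp γ ((hasDerivAt_id γ).const_mul a)
    have h2 : HasDerivAt (fun γ : ℝ => 1+s*γ^2) (s*(2*γ)) γ := by
      simpa using (((hasDerivAt_pow 2 γ)).const_mul s).const_add 1
    have h3 : HasDerivAt (fun γ : ℝ => γ/(2*s*(1+s*γ^2)))
        ((1*(2*s*(1+s*γ^2)) - γ*(2*s*(s*(2*γ))))/(2*s*(1+s*γ^2))^2) γ := by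
      exact (hasDerivAt_id γ).div (((h2.const_mul (2*s)))) (by positivity)
    have h4 := ((h1.div_const (2*a*s)).sub h3).const_mul b
    refine h4.congr_deriv (Eq.symm ?_)
    have hne : (1 + s*γ^2) ≠ 0 := by positivity
    have hq : 1 + γ ^ 2 + γ ^ 2 * b ^ 2 + γ ^ 2 * b ^ 2 * x ^ 2 = 1 + s*γ^2 := by rw [hs]; ring
    rw [hq]
    have haγ : (a*γ)^2 = s*γ^2 := by rw [mul_pow, ha2]
    rw [haγ]
    field_simp
    ring
  rw [intervalIntegral.integral_eq_sub_of_hasDerivAt key]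
  · have h2 : (2+b^2+b^2*x^2 : ℝ) = 1+s := by rw [hs]; ring
    rw [h2]
    norm_num [Real.arctan_zero]
  · apply Continuous.intervalIntegrable
    exact Continuous.div (by continuity) (by continuity) (fun γ => by positivity)

lemma beta_deriv {c : ℝ} (hc : 0 < c) (b : ℝ) :
    HasDerivAt (fun b => -(arctan (Real.sqrt (1+b^2*c)) / (2*c*Real.sqrt (1+b^2*c))))
      (b * (arctan (Real.sqrt (1+b^2*c)) / (2 * Real.sqrt (1+b^2*c) * (1+b^2*c))
          - 1 / (2 * (1+b^2*c) * (1+(1+b^2*c))))) b := by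
  have hq : (0:ℝ) < 1 + b^2*c := by positivity
  set r : ℝ := Real.sqrt (1+b^2*c) with hrdef
  have hr2 : r^2 = 1+b^2*c := Real.sq_sqrt hq.le
  have hrpos : 0 < r := Real.sqrt_pos.mpr hq
  have hq' : HasDerivAt (fun b : ℝ => 1+b^2*c) (2*b*c) b := by
    simpa [mul_comm] using ((hasDerivAt_pow 2 b).mul_const c).const_add 1
  have hr' : HasDerivAt (fun b : ℝ => Real.sqrt (1+b^2*c)) (1/(2*r) * (2*b*c)) b := by
    simpa [Function.comp_def] using (Real.hasDerivAt_sqrt hq.ne').comp b hq'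
  have hA : HasDerivAt (fun b : ℝ => arctan (Real.sqrt (1+b^2*c)))
      (1/(1+r^2) * (1/(2*r) * (2*b*c))) b :=
    by have h := (Real.hasDerivAt_arctan r).comp b hr'; exact h
  have hD : HasDerivAt (fun b : ℝ => 2*c*Real.sqrt (1+b^2*c)) (2*c*(1/(2*r) * (2*b*c))) b :=
    hr'.const_mul (2*c)
  have h := ((hA.div hD (by positivity)).neg)
  refine h.congr_deriv (Eq.symm ?_)
  rw [← hrdef, ← hr2]
  have hr0 : r ≠ 0 := hrpos.ne'
  field_simp
  ring

lemma inner_beta (x : ℝ) :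
    ∫ b in (0:ℝ)..1, b * (arctan (Real.sqrt (1+b^2+b^2*x^2)) / (2 * Real.sqrt (1+b^2+b^2*x^2) * (1+b^2+b^2*x^2))
          - 1 / (2 * (1+b^2+b^2*x^2) * (2+b^2+b^2*x^2)))
      = (π/8 - arctan (Real.sqrt (2+x^2)) / (2 * Real.sqrt (2+x^2))) / (1+x^2) := by
  have hrw : ∀ b : ℝ, (1+b^2+b^2*x^2 : ℝ) = 1+b^2*(1+x^2) := fun b => by ring
  have hrw2 : ∀ b : ℝ, (2+b^2+b^2*x^2 : ℝ) = 1+(1+b^2*(1+x^2)) := fun b => by ring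
  simp only [hrw, hrw2]
  have hc : (0:ℝ) < 1 + x^2 := by positivity
  rw [intervalIntegral.integral_eq_sub_of_hasDerivAt (fun b _ => beta_deriv hc b)]
  · have h1 : (1+1^2*(1+x^2) : ℝ) = 2+x^2 := by ring
    have h0 : (1+(0:ℝ)^2*(1+x^2) : ℝ) = 1 := by ring
    rw [h1, h0]
    have hs2 : (0:ℝ) < Real.sqrt (2+x^2) := Real.sqrt_pos.mpr (by positivity)
    rw [Real.sqrt_one, Real.arctan_one]
    field_simp
    ring
  · apply Continuous.intervalIntegrable
    have hsq : Continuous fun b : ℝ => Real.sqrt (1+b^2*(1+x^2)) :=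
      Real.continuous_sqrt.comp (by fun_prop)
    apply Continuous.mul continuous_id
    apply Continuous.sub
    · exact Continuous.div (Real.continuous_arctan.comp hsq) (by fun_prop) (fun b => by positivity)
    · exact Continuous.div continuous_const (by fun_prop) (fun b => by positivity)

lemma sq_int {a : ℝ} (ha : 0 < a) : ∫ t in (0:ℝ)..1, 1/(a^2+t^2) = arctan (1/a) / a := by
  have key : ∀ t ∈ uIcc (0:ℝ) 1,
      HasDerivAt (fun t => arctan (t/a) / a) (1/(a^2+t^2)) t := by
    intro t _
    have h1 : HasDerivAt (fun t : ℝ => t/a) (1/a) t := (hasDerivAt_id t).div_const a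
    have h2 := ((Real.hasDerivAt_arctan (t/a)).comp t h1).div_const a
    refine h2.congr_deriv (Eq.symm ?_)
    field_simp
  rw [intervalIntegral.integral_eq_sub_of_hasDerivAt key]
  · norm_num
  · apply Continuous.intervalIntegrable
    exact Continuous.div continuous_const (by fun_prop) (fun t => by positivity)

lemma arctan_inv_sqrt3 : arctan (Real.sqrt 3)⁻¹ = π/6 := by
  rw [← one_div, ← Real.tan_pi_div_six]
  exact Real.arctan_tan (by linarith [Real.pi_pos]) (by linarith [Real.pi_pos])

lemma int_L : ∫ x in (0:ℝ)..1, 1/((1+x^2) * Real.sqrt (2+x^2)) = π/6 := by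
  have key : ∀ x ∈ uIcc (0:ℝ) 1,
      HasDerivAt (fun x => arctan (x / Real.sqrt (2+x^2))) (1/((1+x^2) * Real.sqrt (2+x^2))) x := by
    intro x _
    have hq : (0:ℝ) < 2 + x^2 := by positivity
    set r : ℝ := Real.sqrt (2+x^2) with hrdef
    have hr2 : r^2 = 2+x^2 := Real.sq_sqrt hq.le
    have hrpos : 0 < r := Real.sqrt_pos.mpr hq
    have hq' : HasDerivAt (fun x : ℝ => 2+x^2) (2*x) x := by
      simpa using (hasDerivAt_pow 2 x).const_add 2
    have hr' : HasDerivAt (fun x : ℝ => Real.sqrt (2+x^2)) (1/(2*r) * (2*x)) x := by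
      simpa [Function.comp_def] using (Real.hasDerivAt_sqrt hq.ne').comp x hq'
    have hu : HasDerivAt (fun x : ℝ => x / Real.sqrt (2+x^2))
        ((1*r - x*(1/(2*r) * (2*x)))/r^2) x := (hasDerivAt_id x).div hr' hrpos.ne'
    have h := (Real.hasDerivAt_arctan (x/r)).comp x hu
    refine h.congr_deriv (Eq.symm ?_)
    have hx2 : x^2 = r^2 - 2 := by rw [hr2]; ring
    have hr0 : r ≠ 0 := hrpos.ne'
    have h2 : (1:ℝ) < r^2 := by rw [hr2]; nlinarith
    have hne : r^2 - 1 ≠ 0 := by nlinarith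
    rw [show (1+x^2 : ℝ) = r^2 - 1 by rw [hx2]; ring, div_pow, hx2,
      show x * (1 / (2 * r) * (2 * x)) = (r^2-2)/r by linear_combination hx2 / r]
    have hpos : (0:ℝ) < -(r^3*2)+r^5*2 := by nlinarith [mul_pos (pow_pos hrpos 3) (sub_pos.mpr h2)]
    have h3 : 1 + (r^2-2) / r^2 = 2*(r^2-1)/r^2 := by field_simp; ring
    rw [h3]
    field_simp
    ring
  rw [intervalIntegral.integral_eq_sub_of_hasDerivAt key]
  · have h1 : (2+(1:ℝ)^2 : ℝ) = 3 := by norm_num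
    have h0 : (2+(0:ℝ)^2 : ℝ) = 2 := by norm_num
    rw [h1, h0]
    norm_num [arctan_inv_sqrt3]
  · apply Continuous.intervalIntegrable
    exact Continuous.div continuous_const
      ((continuous_const.add (continuous_pow 2)).mul (Real.continuous_sqrt.comp (by fun_prop)))
      (fun x => by positivity)


lemma contK : Continuous fun x : ℝ => arctan (Real.sqrt (2+x^2)) / ((1+x^2) * Real.sqrt (2+x^2)) := by
  apply Continuous.div
  · exact Real.continuous_arctan.comp (Real.continuous_sqrt.comp (by fun_prop))
  · exact (by fun_prop : Continuous fun x:ℝ => (1+x^2)).mul (Real.continuous_sqrt.comp (by fun_prop))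
  · intro x; positivity

lemma contL : Continuous fun x : ℝ => 1/((1+x^2) * Real.sqrt (2+x^2)) := by
  apply Continuous.div continuous_const
  · exact (by fun_prop : Continuous fun x:ℝ => (1+x^2)).mul (Real.continuous_sqrt.comp (by fun_prop))
  · intro x; positivity

lemma inner_t (x : ℝ) : ∫ t in (0:ℝ)..1, 1/((1+x^2)*(2+x^2+t^2))
    = (π/2) * (1/((1+x^2) * Real.sqrt (2+x^2))) - arctan (Real.sqrt (2+x^2)) / ((1+x^2) * Real.sqrt (2+x^2)) := by
  have hq : (0:ℝ) < 2+x^2 := by positivity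
  have ha : 0 < Real.sqrt (2+x^2) := Real.sqrt_pos.mpr hq
  have ha2 : Real.sqrt (2+x^2)^2 = 2+x^2 := Real.sq_sqrt hq.le
  have hcong : ∀ t ∈ uIcc (0:ℝ) 1, (fun t : ℝ => 1/((1+x^2)*(2+x^2+t^2))) t
      = (fun t : ℝ => (1/(1+x^2)) * (1/(Real.sqrt (2+x^2)^2+t^2))) t := by
    intro t _
    simp only [ha2]
    have h1 : (1+x^2 : ℝ) ≠ 0 := by positivity
    have h2 : (2+x^2+t^2 : ℝ) ≠ 0 := by positivity
    field_simp
  rw [intervalIntegral.integral_congr hcong, intervalIntegral.integral_const_mul, sq_int ha,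
    show arctan (1/Real.sqrt (2+x^2)) = π/2 - arctan (Real.sqrt (2+x^2)) by
      rw [one_div]; exact Real.arctan_inv_of_pos ha]
  field_simp

lemma inner_x (t : ℝ) : ∫ x in (0:ℝ)..1, 1/((1+x^2)*(2+x^2+t^2))
    = (π/4) * (1/(1+t^2)) - (1/(1+t^2)) * ((π/2) * (1/Real.sqrt (2+t^2)) - arctan (Real.sqrt (2+t^2)) / Real.sqrt (2+t^2)) := by
  have hq : (0:ℝ) < 2+t^2 := by positivity
  have ha : 0 < Real.sqrt (2+t^2) := Real.sqrt_pos.mpr hq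
  have ha2 : Real.sqrt (2+t^2)^2 = 2+t^2 := Real.sq_sqrt hq.le
  have hcong : ∀ x ∈ uIcc (0:ℝ) 1, (fun x : ℝ => 1/((1+x^2)*(2+x^2+t^2))) x
      = (fun x : ℝ => (1/(1+t^2)) * (1/(1+x^2)) - (1/(1+t^2)) * (1/(Real.sqrt (2+t^2)^2+x^2))) x := by
    intro x _
    simp only [ha2]
    have h1 : (1+x^2 : ℝ) ≠ 0 := by positivity
    have h2 : (2+x^2+t^2 : ℝ) ≠ 0 := by positivity
    have h3 : (1+t^2 : ℝ) ≠ 0 := by positivity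
    have h4 : (2+t^2+x^2 : ℝ) ≠ 0 := by positivity
    field_simp
    ring
  have hI1 : IntervalIntegrable (fun x : ℝ => (1/(1+t^2)) * (1/(1+x^2))) volume 0 1 := by
    apply Continuous.intervalIntegrable
    exact continuous_const.mul (Continuous.div continuous_const (by fun_prop) (fun x => by positivity))
  have hI2 : IntervalIntegrable (fun x : ℝ => (1/(1+t^2)) * (1/(Real.sqrt (2+t^2)^2+x^2))) volume 0 1 := by
    apply Continuous.intervalIntegrable
    exact continuous_const.mul (Continuous.div continuous_const (by fun_prop) (fun x => by positivity))
  rw [intervalIntegral.integral_congr hcong, intervalIntegral.integral_sub hI1 hI2,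
    intervalIntegral.integral_const_mul, intervalIntegral.integral_const_mul, sq_int ha,
    integral_one_div_one_add_sq,
    show arctan (1/Real.sqrt (2+t^2)) = π/2 - arctan (Real.sqrt (2+t^2)) by
      rw [one_div]; exact Real.arctan_inv_of_pos ha,
    Real.arctan_one, Real.arctan_zero]
  ring

lemma fubini_step : (∫ x in (0:ℝ)..1, ∫ t in (0:ℝ)..1, 1/((1+x^2)*(2+x^2+t^2)))
    = ∫ t in (0:ℝ)..1, ∫ x in (0:ℝ)..1, 1/((1+x^2)*(2+x^2+t^2)) := by
  have hc : Continuous (Function.uncurry fun x t : ℝ => 1/((1+x^2)*(2+x^2+t^2))) := by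
    apply Continuous.div continuous_const
    · fun_prop
    · intro p; positivity
  simp_rw [intervalIntegral.integral_of_le (zero_le_one : (0:ℝ) ≤ 1)]
  apply MeasureTheory.integral_integral_swap
  rw [Measure.prod_restrict, ← Measure.volume_eq_prod]
  exact ((hc.continuousOn).integrableOn_compact (isCompact_Icc.prod isCompact_Icc)).mono_set
    (Set.prod_mono Ioc_subset_Icc_self Ioc_subset_Icc_self)

lemma ahmed : ∫ x in (0:ℝ)..1, arctan (Real.sqrt (2+x^2)) / ((1+x^2) * Real.sqrt (2+x^2)) = 5*π^2/96 := by
  set K := ∫ x in (0:ℝ)..1, arctan (Real.sqrt (2+x^2)) / ((1+x^2) * Real.sqrt (2+x^2)) with hK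
  have h1 : (∫ x in (0:ℝ)..1, ∫ t in (0:ℝ)..1, 1/((1+x^2)*(2+x^2+t^2))) = π^2/12 - K := by
    rw [intervalIntegral.integral_congr (fun x _ => inner_t x), intervalIntegral.integral_sub
      ((show Continuous fun x : ℝ => π/2 * (1/((1+x^2) * Real.sqrt (2+x^2))) from continuous_const.mul contL).intervalIntegrable 0 1) (contK.intervalIntegrable 0 1),
      intervalIntegral.integral_const_mul, int_L, ← hK]
    ring
  have h2 : (∫ t in (0:ℝ)..1, ∫ x in (0:ℝ)..1, 1/((1+x^2)*(2+x^2+t^2))) = π^2/16 - π^2/12 + K := by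
    rw [intervalIntegral.integral_congr (fun t _ => inner_x t)]
    have hsplit : ∀ t ∈ uIcc (0:ℝ) 1, (fun t : ℝ => (π/4) * (1/(1+t^2)) - (1/(1+t^2)) * ((π/2) * (1/Real.sqrt (2+t^2)) - arctan (Real.sqrt (2+t^2)) / Real.sqrt (2+t^2))) t
        = (fun t : ℝ => (π/4) * (1/(1+t^2)) - ((π/2) * (1/((1+t^2)*Real.sqrt (2+t^2))) - arctan (Real.sqrt (2+t^2)) / ((1+t^2)*Real.sqrt (2+t^2)))) t := by
      intro t _
      have h3 : (1+t^2 : ℝ) ≠ 0 := by positivity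
      have ha : (0:ℝ) < Real.sqrt (2+t^2) := Real.sqrt_pos.mpr (by positivity)
      field_simp
    rw [intervalIntegral.integral_congr hsplit]
    have hI1 : IntervalIntegrable (fun t : ℝ => (π/4) * (1/(1+t^2))) volume 0 1 := by
      apply Continuous.intervalIntegrable
      exact continuous_const.mul (Continuous.div continuous_const (by fun_prop) (fun t => by positivity))
    rw [intervalIntegral.integral_sub hI1
      ((show Continuous fun t : ℝ => (π/2) * (1/((1+t^2)*Real.sqrt (2+t^2))) - arctan (Real.sqrt (2+t^2)) / ((1+t^2)*Real.sqrt (2+t^2)) from (continuous_const.mul contL).sub contK).intervalIntegrable 0 1),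
      intervalIntegral.integral_sub ((show Continuous fun t : ℝ => (π/2) * (1/((1+t^2)*Real.sqrt (2+t^2))) from continuous_const.mul contL).intervalIntegrable 0 1) (contK.intervalIntegrable 0 1),
      intervalIntegral.integral_const_mul, intervalIntegral.integral_const_mul, int_L, ← hK,
      integral_one_div_one_add_sq, Real.arctan_one, Real.arctan_zero]
    ring
  have := fubini_step
  rw [h1, h2] at this
  linarith

theorem identity_two :
    12 * ∫ x in (0:ℝ)..1, ∫ β in (0:ℝ)..1, ∫ γ in (0:ℝ)..1,
        γ ^ 2 * β / (1 + γ ^ 2 + γ ^ 2 * β ^ 2 + γ ^ 2 * β ^ 2 * x ^ 2) ^ 2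
      = Real.pi ^ 2 / 16 := by
  have hcong1 : ∀ x ∈ uIcc (0:ℝ) 1,
      (fun x : ℝ => ∫ β in (0:ℝ)..1, ∫ γ in (0:ℝ)..1,
        γ ^ 2 * β / (1 + γ ^ 2 + γ ^ 2 * β ^ 2 + γ ^ 2 * β ^ 2 * x ^ 2) ^ 2) x
      = (fun x : ℝ => (π/8 - arctan (Real.sqrt (2+x^2)) / (2 * Real.sqrt (2+x^2))) / (1+x^2)) x := by
    intro x _
    simp only
    rw [intervalIntegral.integral_congr (fun b _ => inner_gamma b x), inner_beta x]
  rw [intervalIntegral.integral_congr hcong1]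
  have hcong2 : ∀ x ∈ uIcc (0:ℝ) 1,
      (fun x : ℝ => (π/8 - arctan (Real.sqrt (2+x^2)) / (2 * Real.sqrt (2+x^2))) / (1+x^2)) x
      = (fun x : ℝ => (π/8) * (1/(1+x^2))
          - (1/2) * (arctan (Real.sqrt (2+x^2)) / ((1+x^2) * Real.sqrt (2+x^2)))) x := by
    intro x _
    have h3 : (1+x^2 : ℝ) ≠ 0 := by positivity
    have ha : (0:ℝ) < Real.sqrt (2+x^2) := Real.sqrt_pos.mpr (by positivity)
    field_simp
  rw [intervalIntegral.integral_congr hcong2]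
  have hI1 : IntervalIntegrable (fun x : ℝ => (π/8) * (1/(1+x^2))) volume 0 1 := by
    apply Continuous.intervalIntegrable
    exact continuous_const.mul (Continuous.div continuous_const (by fun_prop) (fun x => by positivity))
  rw [intervalIntegral.integral_sub hI1 ((show Continuous fun x : ℝ => (1/2) * (arctan (Real.sqrt (2+x^2)) / ((1+x^2) * Real.sqrt (2+x^2))) from continuous_const.mul contK).intervalIntegrable 0 1),
    intervalIntegral.integral_const_mul, intervalIntegral.integral_const_mul,
    integral_one_div_one_add_sq, ahmed, Real.arctan_one, Real.arctan_zero]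
  ring
end

section
/- For each x ∈ [0,1], the inner integration in γ gives ∫₀¹ 1 / ((1 + x²)(1 + γ²·(2 + x²))) dγ = arctan(√(2 + x²)) / ((1 + x²)·√(2 + x²)); consequently ∫₀¹ ∫₀¹ 1 / ((1 + x²)(1 + γ²·(2 + x²))) dγ dx = ∫₀¹ arctan(√(2 + x²)) / ((1 + x²)·√(2 + x²)) dx, i.e. the double integral equals Ahmed's integral. -/
open Real Set

theorem inner_gamma_integral :
    (∀ x ∈ Set.Icc (0:ℝ) 1,
        ∫ γ in (0:ℝ)..1, 1 / ((1 + x ^ 2) * (1 + γ ^ 2 * (2 + x ^ 2)))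
          = Real.arctan (Real.sqrt (2 + x ^ 2)) / ((1 + x ^ 2) * Real.sqrt (2 + x ^ 2)))
    ∧ (∫ x in (0:ℝ)..1, ∫ γ in (0:ℝ)..1, 1 / ((1 + x ^ 2) * (1 + γ ^ 2 * (2 + x ^ 2))))
        = ∫ x in (0:ℝ)..1,
            Real.arctan (Real.sqrt (2 + x ^ 2)) / ((1 + x ^ 2) * Real.sqrt (2 + x ^ 2)) := by
  have key : ∀ x : ℝ,
      ∫ γ in (0:ℝ)..1, 1 / ((1 + x ^ 2) * (1 + γ ^ 2 * (2 + x ^ 2)))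
        = Real.arctan (Real.sqrt (2 + x ^ 2)) / ((1 + x ^ 2) * Real.sqrt (2 + x ^ 2)) := by
    intro x
    have ha : (0:ℝ) < 2 + x ^ 2 := by positivity
    set a := Real.sqrt (2 + x ^ 2) with ha'
    have ha0 : 0 < a := Real.sqrt_pos.mpr ha
    have hsq : a ^ 2 = 2 + x ^ 2 := Real.sq_sqrt ha.le
    have hx : (0:ℝ) < 1 + x ^ 2 := by positivity
    have h1 : ∀ γ : ℝ, 1 / ((1 + x ^ 2) * (1 + γ ^ 2 * (2 + x ^ 2)))
        = (1 + x ^ 2)⁻¹ * ((fun u => 1 / (1 + u ^ 2)) (a * γ)) := by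
      intro γ
      simp only [mul_pow, hsq]
      rw [mul_comm ((2:ℝ) + x ^ 2) (γ ^ 2), ← one_div ((1:ℝ) + x ^ 2),
        div_mul_div_comm, one_mul]
    calc ∫ γ in (0:ℝ)..1, 1 / ((1 + x ^ 2) * (1 + γ ^ 2 * (2 + x ^ 2)))
        = ∫ γ in (0:ℝ)..1, (1 + x ^ 2)⁻¹ * ((fun u => 1 / (1 + u ^ 2)) (a * γ)) := by
          simp_rw [h1]
      _ = (1 + x ^ 2)⁻¹ * ∫ γ in (0:ℝ)..1, (fun u => 1 / (1 + u ^ 2)) (a * γ) :=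
          intervalIntegral.integral_const_mul _ _
      _ = (1 + x ^ 2)⁻¹ * (a⁻¹ • ∫ u in (a*0)..(a*1), 1 / (1 + u ^ 2)) := by
          rw [intervalIntegral.integral_comp_mul_left (fun u => 1 / (1 + u ^ 2)) ha0.ne']
      _ = (1 + x ^ 2)⁻¹ * (a⁻¹ * Real.arctan a) := by
          rw [mul_zero, mul_one, integral_one_div_one_add_sq, Real.arctan_zero, sub_zero,
            smul_eq_mul]
      _ = Real.arctan a / ((1 + x ^ 2) * a) := by
          field_simp
  refine ⟨fun x _ => key x, ?_⟩
  exact intervalIntegral.integral_congr fun x _ => key x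
end

section
/- Identity between the Probability integral and Ahmed's integral: 24 · ∫₀¹ ∫₀¹ ∫₀¹ (∫₀^∞ δ³ · γ² · β · e^{-δ²·(1 + γ² + γ²·β² + γ²·β²·x²)} dδ) dγ dβ dx = 6 · (π²/16) − 6 · ∫₀¹ arctan(√(2 + x²)) / ((1 + x²)·√(2 + x²)) dx. -/
open Real Set MeasureTheory Filter

lemma gauss_moment3 (a : ℝ) (ha : 0 < a) :
    ∫ δ in Set.Ioi (0:ℝ), δ ^ 3 * Real.exp (-δ ^ 2 * a) = 1 / (2 * a ^ 2) := by
  have key : ∫ δ in Set.Ioi (0:ℝ), δ ^ 3 * Real.exp (-δ ^ 2 * a)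
      = 0 - (-(a * 0 ^ 2 + 1) * Real.exp (-(0:ℝ) ^ 2 * a) / (2 * a ^ 2)) := by
    apply integral_Ioi_of_hasDerivAt_of_nonneg'
        (g := fun δ => -(a * δ ^ 2 + 1) * Real.exp (-δ ^ 2 * a) / (2 * a ^ 2))
    · intro x _
      have h1 : HasDerivAt (fun δ : ℝ => -δ ^ 2 * a) (-(2 * x) * a) x := by
        have := ((hasDerivAt_pow 2 x).neg).mul_const a
        simpa using this
      have h2 : HasDerivAt (fun δ : ℝ => Real.exp (-δ ^ 2 * a)) (Real.exp (-x ^ 2 * a) * (-(2 * x) * a)) x := by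
        exact (Real.hasDerivAt_exp (-x ^ 2 * a)).comp x h1
      have h3 : HasDerivAt (fun δ : ℝ => -(a * δ ^ 2 + 1)) (-(a * (2 * x))) x := by
        have := (((hasDerivAt_pow 2 x).const_mul a).add_const 1).neg
        refine this.congr_deriv ?_
        norm_num
      have h4 := (h3.mul h2).div_const (2 * a ^ 2)
      refine h4.congr_deriv ?_
      field_simp
      ring
    · intro x hx
      have : (0:ℝ) < x := hx
      positivity
    · have hcomp : Tendsto (fun δ : ℝ => a * δ ^ 2) atTop atTop := by
        exact (tendsto_pow_atTop (by norm_num)).const_mul_atTop ha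
      have h1 : Tendsto (fun y : ℝ => -(y + 1) * Real.exp (-y) / (2 * a ^ 2)) atTop (nhds 0) := by
        have hy : Tendsto (fun y : ℝ => y * Real.exp (-y)) atTop (nhds 0) := by
          simpa using tendsto_pow_mul_exp_neg_atTop_nhds_zero 1
        have := ((hy.add tendsto_exp_neg_atTop_nhds_zero).neg).div_const (2 * a ^ 2)
        simpa [neg_mul, add_mul, one_mul, neg_div, add_div] using this
      have := h1.comp hcomp
      convert this using 2 with δ
      simp [Function.comp]
      ring_nf
  rw [key]
  norm_num
  ring

lemma gamma_int (s : ℝ) (hs : 0 < s) :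
    ∫ γ in (0:ℝ)..1, γ ^ 2 / (2 * (1 + γ ^ 2 * s ^ 2) ^ 2)
      = Real.arctan s / (4 * s ^ 3) - 1 / (4 * s ^ 2 * (1 + s ^ 2)) := by
  have hF : ∀ γ : ℝ, HasDerivAt
      (fun γ : ℝ => Real.arctan (s * γ) / (4 * s ^ 3) - γ / (4 * s ^ 2 * (1 + s ^ 2 * γ ^ 2)))
      (γ ^ 2 / (2 * (1 + γ ^ 2 * s ^ 2) ^ 2)) γ := by
    intro γ
    have hpos : (0:ℝ) < 1 + s ^ 2 * γ ^ 2 := by positivity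
    have h1 : HasDerivAt (fun γ : ℝ => Real.arctan (s * γ)) (1 / (1 + (s * γ) ^ 2) * s) γ :=
      by exact (Real.hasDerivAt_arctan (s * γ)).comp γ (by simpa using (hasDerivAt_id γ).const_mul s)
    have h1' := h1.div_const (4 * s ^ 3)
    have hden : HasDerivAt (fun γ : ℝ => 4 * s ^ 2 * (1 + s ^ 2 * γ ^ 2))
        (4 * s ^ 2 * (s ^ 2 * (2 * γ))) γ := by
      have := (((hasDerivAt_pow 2 γ).const_mul (s ^ 2)).const_add 1).const_mul (4 * s ^ 2)
      simpa [mul_comm, mul_assoc, mul_left_comm] using this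
    have h2 : HasDerivAt (fun γ : ℝ => γ / (4 * s ^ 2 * (1 + s ^ 2 * γ ^ 2)))
        ((1 * (4 * s ^ 2 * (1 + s ^ 2 * γ ^ 2)) - γ * (4 * s ^ 2 * (s ^ 2 * (2 * γ))))
          / (4 * s ^ 2 * (1 + s ^ 2 * γ ^ 2)) ^ 2) γ := by
      exact (hasDerivAt_id γ).div hden (by positivity)
    have h := h1'.sub h2
    refine h.congr_deriv ?_
    have h2s : (1 + (s * γ) ^ 2) = 1 + s ^ 2 * γ ^ 2 := by ring
    rw [h2s]
    field_simp
    ring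
  have hcont : Continuous fun γ : ℝ => γ ^ 2 / (2 * (1 + γ ^ 2 * s ^ 2) ^ 2) := by
    apply Continuous.div (by continuity) (by continuity)
    intro γ; positivity
  rw [intervalIntegral.integral_eq_sub_of_hasDerivAt (fun γ _ => hF γ)
      (hcont.intervalIntegrable 0 1)]
  rw [mul_zero, Real.arctan_zero, mul_one]
  norm_num

lemma beta_int (k : ℝ) (hk : 0 < k) :
    ∫ β in (0:ℝ)..1,
        β * (Real.arctan (Real.sqrt (1 + k * β ^ 2)) / (4 * (1 + k * β ^ 2) * Real.sqrt (1 + k * β ^ 2))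
          - 1 / (4 * (1 + k * β ^ 2) * (1 + (1 + k * β ^ 2))))
      = (1 / (4 * k)) * (Real.pi / 4 - Real.arctan (Real.sqrt (1 + k)) / Real.sqrt (1 + k)) := by
  have hF : ∀ β : ℝ, HasDerivAt
      (fun β : ℝ => -(Real.arctan (Real.sqrt (1 + k * β ^ 2)) / (4 * k * Real.sqrt (1 + k * β ^ 2))))
      (β * (Real.arctan (Real.sqrt (1 + k * β ^ 2)) / (4 * (1 + k * β ^ 2) * Real.sqrt (1 + k * β ^ 2))
          - 1 / (4 * (1 + k * β ^ 2) * (1 + (1 + k * β ^ 2))))) β := by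
    intro β
    have hcpos : (0:ℝ) < 1 + k * β ^ 2 := by positivity
    have htpos : (0:ℝ) < Real.sqrt (1 + k * β ^ 2) := Real.sqrt_pos.2 hcpos
    have hc : HasDerivAt (fun β : ℝ => 1 + k * β ^ 2) (k * (2 * β)) β := by
      have := ((hasDerivAt_pow 2 β).const_mul k).const_add 1
      simpa using this
    have hs : HasDerivAt (fun β : ℝ => Real.sqrt (1 + k * β ^ 2))
        (1 / (2 * Real.sqrt (1 + k * β ^ 2)) * (k * (2 * β))) β :=
      (Real.hasDerivAt_sqrt hcpos.ne').comp β hc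
    have ha : HasDerivAt (fun β : ℝ => Real.arctan (Real.sqrt (1 + k * β ^ 2)))
        (1 / (1 + Real.sqrt (1 + k * β ^ 2) ^ 2) * (1 / (2 * Real.sqrt (1 + k * β ^ 2)) * (k * (2 * β)))) β :=
      (Real.hasDerivAt_arctan _).comp β hs
    have hv : HasDerivAt (fun β : ℝ => 4 * k * Real.sqrt (1 + k * β ^ 2))
        (4 * k * (1 / (2 * Real.sqrt (1 + k * β ^ 2)) * (k * (2 * β)))) β := hs.const_mul (4 * k)
    have hv0 : 4 * k * Real.sqrt (1 + k * β ^ 2) ≠ 0 := by positivity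
    have hH := (ha.div hv hv0).neg
    refine hH.congr_deriv ?_
    set t := Real.sqrt (1 + k * β ^ 2) with hts
    have ht2 : 1 + k * β ^ 2 = t ^ 2 := (Real.sq_sqrt hcpos.le).symm
    rw [ht2]
    have ht0 : t ≠ 0 := (Real.sqrt_pos.2 hcpos).ne'
    field_simp
    ring
  have hcont : Continuous fun β : ℝ =>
      β * (Real.arctan (Real.sqrt (1 + k * β ^ 2)) / (4 * (1 + k * β ^ 2) * Real.sqrt (1 + k * β ^ 2))
        - 1 / (4 * (1 + k * β ^ 2) * (1 + (1 + k * β ^ 2)))) := by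
    apply continuous_id.mul
    apply Continuous.sub
    · apply Continuous.div
      · exact Real.continuous_arctan.comp (Real.continuous_sqrt.comp (by continuity))
      · continuity
      · intro β
        have hcpos : (0:ℝ) < 1 + k * β ^ 2 := by positivity
        have := Real.sqrt_pos.2 hcpos
        positivity
    · apply Continuous.div continuous_const (by continuity)
      intro β
      have hcpos : (0:ℝ) < 1 + k * β ^ 2 := by positivity
      positivity
  rw [intervalIntegral.integral_eq_sub_of_hasDerivAt (fun β _ => hF β)
      (hcont.intervalIntegrable 0 1)]
  norm_num [Real.sqrt_one, Real.arctan_one]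
  ring

theorem probability_ahmed_link :
    24 * (∫ x in (0:ℝ)..1, ∫ β in (0:ℝ)..1, ∫ γ in (0:ℝ)..1,
        ∫ δ in Set.Ioi (0:ℝ),
          δ ^ 3 * γ ^ 2 * β *
            Real.exp (-δ ^ 2 * (1 + γ ^ 2 + γ ^ 2 * β ^ 2 + γ ^ 2 * β ^ 2 * x ^ 2)))
      = 6 * (Real.pi ^ 2 / 16)
        - 6 * ∫ x in (0:ℝ)..1,
            Real.arctan (Real.sqrt (2 + x ^ 2)) / ((1 + x ^ 2) * Real.sqrt (2 + x ^ 2)) := by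
  -- Step 1: innermost Gaussian-moment integral
  have step1 : ∀ x β γ : ℝ,
      (∫ δ in Set.Ioi (0:ℝ),
          δ ^ 3 * γ ^ 2 * β *
            Real.exp (-δ ^ 2 * (1 + γ ^ 2 + γ ^ 2 * β ^ 2 + γ ^ 2 * β ^ 2 * x ^ 2)))
        = β * (γ ^ 2 / (2 * (1 + γ ^ 2 * Real.sqrt (1 + (1 + x ^ 2) * β ^ 2) ^ 2) ^ 2)) := by
    intro x β γ
    have hs2 : Real.sqrt (1 + (1 + x ^ 2) * β ^ 2) ^ 2 = 1 + (1 + x ^ 2) * β ^ 2 :=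
      Real.sq_sqrt (by positivity)
    have ha : (0:ℝ) < 1 + γ ^ 2 + γ ^ 2 * β ^ 2 + γ ^ 2 * β ^ 2 * x ^ 2 := by positivity
    have hrw : ∀ δ : ℝ,
        δ ^ 3 * γ ^ 2 * β *
            Real.exp (-δ ^ 2 * (1 + γ ^ 2 + γ ^ 2 * β ^ 2 + γ ^ 2 * β ^ 2 * x ^ 2))
          = (γ ^ 2 * β) * (δ ^ 3 *
            Real.exp (-δ ^ 2 * (1 + γ ^ 2 + γ ^ 2 * β ^ 2 + γ ^ 2 * β ^ 2 * x ^ 2))) :=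
      fun δ => by ring
    simp only [hrw]
    rw [MeasureTheory.integral_const_mul, gauss_moment3 _ ha, hs2]
    have h1 : 1 + γ ^ 2 * (1 + (1 + x ^ 2) * β ^ 2)
        = 1 + γ ^ 2 + γ ^ 2 * β ^ 2 + γ ^ 2 * β ^ 2 * x ^ 2 := by ring
    rw [h1]
    ring
  -- Step 2: γ-integral
  have step2 : ∀ x β : ℝ,
      (∫ γ in (0:ℝ)..1,
          β * (γ ^ 2 / (2 * (1 + γ ^ 2 * Real.sqrt (1 + (1 + x ^ 2) * β ^ 2) ^ 2) ^ 2)))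
        = β * (Real.arctan (Real.sqrt (1 + (1 + x ^ 2) * β ^ 2))
              / (4 * (1 + (1 + x ^ 2) * β ^ 2) * Real.sqrt (1 + (1 + x ^ 2) * β ^ 2))
            - 1 / (4 * (1 + (1 + x ^ 2) * β ^ 2) * (1 + (1 + (1 + x ^ 2) * β ^ 2)))) := by
    intro x β
    have hcpos : (0:ℝ) < 1 + (1 + x ^ 2) * β ^ 2 := by positivity
    have hs : (0:ℝ) < Real.sqrt (1 + (1 + x ^ 2) * β ^ 2) := Real.sqrt_pos.2 hcpos
    have hs2 : Real.sqrt (1 + (1 + x ^ 2) * β ^ 2) ^ 2 = 1 + (1 + x ^ 2) * β ^ 2 :=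
      Real.sq_sqrt hcpos.le
    rw [intervalIntegral.integral_const_mul, gamma_int _ hs]
    have h3 : 4 * Real.sqrt (1 + (1 + x ^ 2) * β ^ 2) ^ 3
        = 4 * (1 + (1 + x ^ 2) * β ^ 2) * Real.sqrt (1 + (1 + x ^ 2) * β ^ 2) := by
      rw [show Real.sqrt (1 + (1 + x ^ 2) * β ^ 2) ^ 3 = Real.sqrt (1 + (1 + x ^ 2) * β ^ 2) ^ 2 * Real.sqrt (1 + (1 + x ^ 2) * β ^ 2) by ring, hs2, ← mul_assoc]
    have h4 : 4 * Real.sqrt (1 + (1 + x ^ 2) * β ^ 2) ^ 2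
          * (1 + Real.sqrt (1 + (1 + x ^ 2) * β ^ 2) ^ 2)
        = 4 * (1 + (1 + x ^ 2) * β ^ 2) * (1 + (1 + (1 + x ^ 2) * β ^ 2)) := by
      rw [hs2]
    rw [h3, h4]
  -- Step 3: β-integral
  have step3 : ∀ x : ℝ,
      (∫ β in (0:ℝ)..1,
          β * (Real.arctan (Real.sqrt (1 + (1 + x ^ 2) * β ^ 2))
              / (4 * (1 + (1 + x ^ 2) * β ^ 2) * Real.sqrt (1 + (1 + x ^ 2) * β ^ 2))
            - 1 / (4 * (1 + (1 + x ^ 2) * β ^ 2) * (1 + (1 + (1 + x ^ 2) * β ^ 2)))))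
        = 1 / (4 * (1 + x ^ 2)) * (Real.pi / 4
            - Real.arctan (Real.sqrt (2 + x ^ 2)) / Real.sqrt (2 + x ^ 2)) := by
    intro x
    have hk : (0:ℝ) < 1 + x ^ 2 := by positivity
    rw [beta_int _ hk]
    have h1 : (1:ℝ) + (1 + x ^ 2) = 2 + x ^ 2 := by ring
    rw [h1]
  simp only [step1, step2, step3]
  -- Final step: x-integral
  have hsplit : ∀ x : ℝ,
      1 / (4 * (1 + x ^ 2)) * (Real.pi / 4
          - Real.arctan (Real.sqrt (2 + x ^ 2)) / Real.sqrt (2 + x ^ 2))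
        = Real.pi / 16 * (1 / (1 + x ^ 2))
          - 1 / 4 * (Real.arctan (Real.sqrt (2 + x ^ 2))
              / ((1 + x ^ 2) * Real.sqrt (2 + x ^ 2))) := by
    intro x
    have h1 : (0:ℝ) < 1 + x ^ 2 := by positivity
    have h2 : (0:ℝ) < Real.sqrt (2 + x ^ 2) := Real.sqrt_pos.2 (by positivity)
    field_simp
    ring
  simp only [hsplit]
  have hc2 : Continuous fun x : ℝ =>
      Real.arctan (Real.sqrt (2 + x ^ 2)) / ((1 + x ^ 2) * Real.sqrt (2 + x ^ 2)) := by
    apply Continuous.div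
    · exact Real.continuous_arctan.comp (Real.continuous_sqrt.comp (continuous_const.add (continuous_pow 2)))
    · exact (continuous_const.add (continuous_pow 2)).mul (Real.continuous_sqrt.comp (continuous_const.add (continuous_pow 2)))
    · intro x
      have h1 : (0:ℝ) < 1 + x ^ 2 := by positivity
      have h2 : (0:ℝ) < Real.sqrt (2 + x ^ 2) := Real.sqrt_pos.2 (by positivity)
      positivity
  have hc1 : Continuous fun x : ℝ => Real.pi / 16 * (1 / (1 + x ^ 2)) := by
    apply Continuous.mul continuous_const
    apply Continuous.div continuous_const (continuous_const.fun_add (continuous_pow 2))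
    intro x; positivity
  rw [intervalIntegral.integral_sub (hc1.intervalIntegrable 0 1)
      ((continuous_const.fun_mul hc2).intervalIntegrable 0 1),
    intervalIntegral.integral_const_mul, intervalIntegral.integral_const_mul,
    integral_one_div_one_add_sq]
  rw [Real.arctan_one, Real.arctan_zero]
  ring
end
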